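/- arXiv:2312.12203 — 8 statements merged into one kernel-verified Lean document; each statement's English description precedes it below -/
import Mathlib

section
/- Let m, k, l, N be positive integers with m > 1, k ∤ m and 1 ≤ l < k. Then the generalized Wronskian–Hermite polynomial W_N^{[m,k,l]}(z) is a monic polynomial in z of degree Γ = N((k−1)(N−1)+2l)/2. -/
open scoped BigOperators

/-- `pPoly m j` is the polynomial `p_j^{[m]}(z) = ∑_{i=0}^{⌊j/m⌋} z^{j-im}/(i!(j-im)!)`
for `j ≥ 0`, and `0` for `j < 0`. -/
noncomputable def pPoly (m : ℕ) : ℤ → Polynomial ℂ := fun j =>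
  if 0 ≤ j then
    ∑ i ∈ Finset.range (j.toNat / m + 1),
      Polynomial.C (((Nat.factorial i * Nat.factorial (j.toNat - i * m) : ℕ) : ℂ))⁻¹ *
        Polynomial.X ^ (j.toNat - i * m)
  else 0

/-- The normalizing constant `c_N^{[m,k,l]} = k^{-N(N-1)/2} ∏_{i=1}^{N} (k(i-1)+l)!/(i-1)!`. -/
noncomputable def cConst (k l N : ℕ) : ℂ :=
  ((k : ℂ) ^ (N * (N - 1) / 2))⁻¹ *
    ∏ i ∈ Finset.range N, ((Nat.factorial (k * i + l) : ℂ) / ((Nat.factorial i : ℕ) : ℂ))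

/-- The generalized Wronskian–Hermite polynomial
`W_N^{[m,k,l]}(z) = c_N^{[m,k,l]} · det_{1≤i,j≤N} ( p^{[m]}_{k(j-1)+l-i+1}(z) )`. -/
noncomputable def WPoly (m k l N : ℕ) : Polynomial ℂ :=
  Polynomial.C (cConst k l N) *
    Matrix.det (Matrix.of fun i j : Fin N =>
      pPoly m (((k * (j : ℕ) + l : ℕ) : ℤ) - ((i : ℕ) : ℤ)))

section WHaux
open Polynomial Finset


lemma pPoly_neg {m : ℕ} {j : ℤ} (h : j < 0) : pPoly m j = 0 := by
  simp [pPoly, not_le.mpr h]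

lemma pPoly_natDegree_le (m : ℕ) (j : ℤ) : (pPoly m j).natDegree ≤ j.toNat := by
  unfold pPoly
  split
  · exact natDegree_sum_le_of_forall_le _ _ fun i _ =>
      (natDegree_C_mul_X_pow_le _ _).trans (Nat.sub_le _ _)
  · simp

lemma pPoly_coeff_top {m : ℕ} (hm : 1 < m) {j : ℤ} (h : 0 ≤ j) :
    (pPoly m j).coeff j.toNat = ((Nat.factorial j.toNat : ℂ))⁻¹ := by
  unfold pPoly
  rw [if_pos h, finset_sum_coeff, Finset.sum_eq_single 0]
  · simp [coeff_C_mul, coeff_X_pow]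
  · intro i hi hi0
    rw [coeff_C_mul, coeff_X_pow, if_neg, mul_zero]
    have h1 : i * m ≤ j.toNat := (Nat.le_div_iff_mul_le (by omega)).mp
      (Nat.lt_succ_iff.mp (Finset.mem_range.mp hi))
    have h2 : 1 * 1 ≤ i * m := Nat.mul_le_mul (Nat.one_le_iff_ne_zero.mpr hi0) (by omega)
    omega
  · intro h0; exact absurd (Finset.mem_range.mpr (Nat.succ_pos _)) h0

lemma pPoly_ne_zero {m : ℕ} (hm : 1 < m) {j : ℤ} (h : 0 ≤ j) : pPoly m j ≠ 0 := by
  intro h0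
  have := pPoly_coeff_top hm h
  rw [h0] at this
  simp only [coeff_zero] at this
  exact (inv_ne_zero (by exact_mod_cast (Nat.factorial_ne_zero j.toNat))) this.symm

lemma pPoly_natDegree {m : ℕ} (hm : 1 < m) {j : ℤ} (h : 0 ≤ j) :
    (pPoly m j).natDegree = j.toNat :=
  le_antisymm (pPoly_natDegree_le m j) (le_natDegree_of_ne_zero (by
    rw [pPoly_coeff_top hm h]
    exact inv_ne_zero (by exact_mod_cast (Nat.factorial_ne_zero j.toNat))))

lemma pPoly_leadingCoeff {m : ℕ} (hm : 1 < m) {j : ℤ} (h : 0 ≤ j) :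
    (pPoly m j).leadingCoeff = ((Nat.factorial j.toNat : ℂ))⁻¹ := by
  rw [leadingCoeff, pPoly_natDegree hm h, pPoly_coeff_top hm h]

lemma gamma_arith (k l N : ℕ) (hk : 1 ≤ k) :
    N * ((k - 1) * (N - 1) + 2 * l) / 2
      = (∑ i ∈ Finset.range N, (k * i + l)) - ∑ i ∈ Finset.range N, i := by
  obtain ⟨k', rfl⟩ : ∃ k', k = k' + 1 := ⟨k - 1, by omega⟩
  set S := ∑ i ∈ Finset.range N, i with hS
  have h2 : S * 2 = N * (N - 1) := Finset.sum_range_id_mul_two N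
  have hA : (∑ i ∈ Finset.range N, ((k' + 1) * i + l)) = (k' + 1) * S + N * l := by
    rw [Finset.sum_add_distrib, ← Finset.mul_sum, Finset.sum_const, Finset.card_range,
      smul_eq_mul]
  rw [hA]
  have e1 : N * ((k' + 1 - 1) * (N - 1) + 2 * l) = k' * (N * (N - 1)) + N * l * 2 := by
    simp only [Nat.add_sub_cancel]; ring
  rw [← h2] at e1
  have e2 : N * ((k' + 1 - 1) * (N - 1) + 2 * l) = (k' * S + N * l) * 2 := by
    rw [e1]; ring
  rw [e2, Nat.mul_div_cancel _ (by norm_num)]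
  have e3 : (k' + 1) * S = k' * S + S := by ring
  omega

lemma T_eq (k N : ℕ) :
    (∏ i : Fin N, ∏ j ∈ Finset.Ioi i, (k * ((j : ℕ) - (i : ℕ))))
      = k ^ (∑ i ∈ Finset.range N, i) * ∏ i ∈ Finset.range N, Nat.factorial i := by
  have inner : ∀ i : Fin N, ∏ j ∈ Finset.Ioi i, (k * ((j : ℕ) - (i : ℕ)))
      = k ^ (N - 1 - (i : ℕ)) * Nat.factorial (N - 1 - (i : ℕ)) := by
    intro i
    have hmap : ∏ x ∈ Finset.Ioc (i : ℕ) (N - 1), (k * (x - (i : ℕ)))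
        = ∏ j ∈ Finset.Ioi i, (k * ((j : ℕ) - (i : ℕ))) := by
      rw [show Finset.Ioc (i : ℕ) (N - 1) = Finset.Ioo (i : ℕ) N by
        ext x; simp only [Finset.mem_Ioc, Finset.mem_Ioo]; have := i.isLt; omega,
        ← Fin.map_valEmbedding_Ioi, Finset.prod_map]; rfl
    rw [← hmap]
    have hIoc : Finset.Ioc (i : ℕ) (N - 1) = Finset.Ico ((i : ℕ) + 1) N := by
      ext x
      simp only [Finset.mem_Ioc, Finset.mem_Ico]
      have := i.isLt
      omega
    rw [hIoc, Finset.prod_Ico_eq_prod_range]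
    rw [Finset.prod_congr rfl
      (fun t _ => show k * (((i : ℕ) + 1 + t) - (i : ℕ)) = k * (t + 1) by congr 1; omega)]
    rw [Finset.prod_mul_distrib, Finset.prod_const, Finset.card_range,
      Finset.prod_range_add_one_eq_factorial]
    congr 2 <;> omega
  rw [Finset.prod_congr rfl (fun i _ => inner i),
    Fin.prod_univ_eq_prod_range (fun a => k ^ (N - 1 - a) * Nat.factorial (N - 1 - a)) N,
    Finset.prod_mul_distrib, Finset.prod_pow_eq_pow_sum]
  congr 1
  · rw [Finset.sum_range_reflect (fun x => x) N]
  · exact Finset.prod_range_reflect (fun x => Nat.factorial x) N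

end WHaux

open Polynomial Finset in
/-- For positive integers `m, k, l, N` with `m > 1`, `k ∤ m` and `1 ≤ l < k`, the
generalized Wronskian–Hermite polynomial `W_N^{[m,k,l]}` is monic of degree
`Γ = N((k-1)(N-1)+2l)/2`. -/
theorem wronskianHermite_monic_of_degree_Gamma
    (m k l N : ℕ) (hm : 1 < m) (hk : ¬ k ∣ m) (hl : 1 ≤ l) (hlk : l < k) (hN : 0 < N) :
    (WPoly m k l N).Monic ∧
      (WPoly m k l N).natDegree = N * ((k - 1) * (N - 1) + 2 * l) / 2 := by
  have hk1 : 1 ≤ k := le_of_lt (lt_of_le_of_lt hl hlk)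
  set M : Matrix (Fin N) (Fin N) (Polynomial ℂ) :=
    Matrix.of (fun i j : Fin N => pPoly m (((k * (j : ℕ) + l : ℕ) : ℤ) - ((i : ℕ) : ℤ)))
    with hMdef
  have hW : WPoly m k l N = Polynomial.C (cConst k l N) * M.det := rfl
  set S : ℕ := ∑ i ∈ Finset.range N, i with hSdef
  set D : ℕ := (∑ i ∈ Finset.range N, (k * i + l)) - S with hDdef
  have hSA : S ≤ ∑ i ∈ Finset.range N, (k * i + l) := by
    refine Finset.sum_le_sum fun i _ => ?_
    have : 1 * i ≤ k * i := Nat.mul_le_mul_right i hk1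
    omega
  -- the leading-coefficient matrix
  set L : Matrix (Fin N) (Fin N) ℂ := fun a b =>
    ((Nat.factorial (k * (b : ℕ) + l) : ℂ))⁻¹ *
      ((Nat.descFactorial (k * (b : ℕ) + l) (a : ℕ) : ℕ) : ℂ) with hLdef
  have hD_int : (D : ℤ) = (∑ i : Fin N, ((k * (i : ℕ) + l : ℕ) : ℤ))
      - ∑ i : Fin N, ((i : ℕ) : ℤ) := by
    rw [hDdef, Nat.cast_sub hSA]
    congr 1
    · rw [Fin.sum_univ_eq_sum_range (fun i => ((k * i + l : ℕ) : ℤ)) N, ← Nat.cast_sum]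
    · rw [hSdef, Fin.sum_univ_eq_sum_range (fun i => (i : ℤ)) N, ← Nat.cast_sum]
  have hperm : ∀ σ : Equiv.Perm (Fin N),
      (∏ i : Fin N, M (σ i) i).natDegree ≤ D ∧
      (∏ i : Fin N, M (σ i) i).coeff D = ∏ i : Fin N, L (σ i) i := by
    intro σ
    by_cases hσ : ∀ i : Fin N, (σ i : ℕ) ≤ k * (i : ℕ) + l
    · have hj0 : ∀ i : Fin N,
          (0 : ℤ) ≤ ((k * (i : ℕ) + l : ℕ) : ℤ) - ((σ i : ℕ) : ℤ) := fun i => by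
        have := hσ i; omega
      have hMe : ∀ i : Fin N, M (σ i) i
          = pPoly m (((k * (i : ℕ) + l : ℕ) : ℤ) - ((σ i : ℕ) : ℤ)) := fun i => rfl
      have hne : ∀ i : Fin N, M (σ i) i ≠ 0 := fun i => by
        rw [hMe i]; exact pPoly_ne_zero hm (hj0 i)
      have hdeg : ∀ i : Fin N, (M (σ i) i).natDegree = k * (i : ℕ) + l - (σ i : ℕ) :=
        fun i => by
          rw [hMe i, pPoly_natDegree hm (hj0 i)]; omega
      have hsum : ∑ i : Fin N, (k * (i : ℕ) + l - (σ i : ℕ)) = D := by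
        have hZ : ((∑ i : Fin N, (k * (i : ℕ) + l - (σ i : ℕ)) : ℕ) : ℤ) = (D : ℤ) := by
          rw [Nat.cast_sum, hD_int,
            ← Equiv.sum_comp σ (fun i : Fin N => ((i : ℕ) : ℤ)), ← Finset.sum_sub_distrib]
          refine Finset.sum_congr rfl fun i _ => ?_
          have := hσ i; push_cast [Nat.cast_sub this]; ring
        exact_mod_cast hZ
      have hprodDeg : (∏ i : Fin N, M (σ i) i).natDegree = D := by
        rw [Polynomial.natDegree_prod _ _ (fun i _ => hne i)]
        rw [Finset.sum_congr rfl (fun i _ => hdeg i), hsum]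
      constructor
      · exact le_of_eq hprodDeg
      · rw [← hprodDeg, Polynomial.coeff_natDegree, Polynomial.leadingCoeff_prod]
        refine Finset.prod_congr rfl fun i _ => ?_
        rw [hMe i, pPoly_leadingCoeff hm (hj0 i)]
        have hs := hσ i
        have htn : (((k * (i : ℕ) + l : ℕ) : ℤ) - ((σ i : ℕ) : ℤ)).toNat
            = k * (i : ℕ) + l - (σ i : ℕ) := by omega
        rw [htn]
        have hfac : ((Nat.factorial (k * (i : ℕ) + l - (σ i : ℕ)) : ℂ))
            * ((Nat.descFactorial (k * (i : ℕ) + l) (σ i : ℕ) : ℕ) : ℂ)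
            = ((Nat.factorial (k * (i : ℕ) + l) : ℂ)) := by
          exact_mod_cast congrArg (Nat.cast : ℕ → ℂ)
            (Nat.factorial_mul_descFactorial hs)
        have h1 : ((Nat.factorial (k * (i : ℕ) + l) : ℂ)) ≠ 0 := by
          exact_mod_cast Nat.factorial_ne_zero _
        have h2 : ((Nat.factorial (k * (i : ℕ) + l - (σ i : ℕ)) : ℂ)) ≠ 0 := by
          exact_mod_cast Nat.factorial_ne_zero _
        rw [hLdef]
        field_simp
        linear_combination -hfac
    · push_neg at hσ
      obtain ⟨i, hi⟩ := hσ
      have hMi : M (σ i) i = 0 := by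
        have : (((k * (i : ℕ) + l : ℕ) : ℤ) - ((σ i : ℕ) : ℤ)) < 0 := by omega
        exact pPoly_neg this
      have hP0 : (∏ i : Fin N, M (σ i) i) = 0 :=
        Finset.prod_eq_zero (Finset.mem_univ i) hMi
      have hL0 : (∏ i : Fin N, L (σ i) i) = 0 := by
        refine Finset.prod_eq_zero (Finset.mem_univ i) ?_
        rw [hLdef]
        simp only
        rw [Nat.descFactorial_eq_zero_iff_lt.mpr hi]
        simp
      rw [hP0, hL0]
      simp
  have hsmul : ∀ σ : Equiv.Perm (Fin N), Equiv.Perm.sign σ • (∏ i : Fin N, M (σ i) i)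
      = Polynomial.C (((Equiv.Perm.sign σ : ℤ) : ℂ)) * ∏ i : Fin N, M (σ i) i := by
    intro σ
    rw [Units.smul_def, zsmul_eq_mul, Polynomial.C_eq_intCast]
  have hdetM_deg : M.det.natDegree ≤ D := by
    rw [Matrix.det_apply M]
    refine Polynomial.natDegree_sum_le_of_forall_le _ _ fun σ _ => ?_
    rw [hsmul σ]
    refine (Polynomial.natDegree_mul_le).trans ?_
    simpa [Polynomial.natDegree_C] using (hperm σ).1
  have hdetM_coeff : M.det.coeff D = L.det := by
    rw [Matrix.det_apply M, Polynomial.finset_sum_coeff, Matrix.det_apply L]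
    refine Finset.sum_congr rfl fun σ _ => ?_
    rw [hsmul σ, Polynomial.coeff_C_mul, (hperm σ).2, Units.smul_def, zsmul_eq_mul]
  -- compute L.det
  have hLvan : L.det = (∏ b : Fin N, ((Nat.factorial (k * (b : ℕ) + l) : ℂ))⁻¹) *
      ∏ i : Fin N, ∏ j ∈ Finset.Ioi i,
        (((k * (j : ℕ) + l : ℕ) : ℂ) - ((k * (i : ℕ) + l : ℕ) : ℂ)) := by
    have hcol := Matrix.det_mul_row
      (fun b : Fin N => ((Nat.factorial (k * (b : ℕ) + l) : ℂ))⁻¹)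
      (Matrix.of fun a b : Fin N => ((Nat.descFactorial (k * (b : ℕ) + l) (a : ℕ) : ℕ) : ℂ))
    have hLeq : L = Matrix.of fun a b : Fin N =>
        ((Nat.factorial (k * (b : ℕ) + l) : ℂ))⁻¹ *
          (Matrix.of fun a b : Fin N =>
            ((Nat.descFactorial (k * (b : ℕ) + l) (a : ℕ) : ℕ) : ℂ)) a b := rfl
    rw [hLeq, hcol]
    congr 1
    have h1 := Matrix.det_eval_matrixOfPolynomials_eq_det_vandermonde
      (fun i : Fin N => ((k * (i : ℕ) + l : ℕ) : ℂ))
      (fun j : Fin N => descPochhammer ℂ (j : ℕ))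
      (fun i => descPochhammer_natDegree (R := ℂ) (i : ℕ))
      (fun i => monic_descPochhammer _ _)
    have htr : (Matrix.of fun a b : Fin N =>
        ((Nat.descFactorial (k * (b : ℕ) + l) (a : ℕ) : ℕ) : ℂ))
        = (Matrix.of fun i j : Fin N =>
            (descPochhammer ℂ (j : ℕ)).eval (((k * (i : ℕ) + l : ℕ) : ℂ))).transpose := by
      ext a b
      simp only [Matrix.transpose_apply, Matrix.of_apply]
      rw [descPochhammer_eval_eq_descFactorial]
    rw [htr, Matrix.det_transpose, ← h1, Matrix.det_vandermonde]
  have hpair : (∏ i : Fin N, ∏ j ∈ Finset.Ioi i,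
      (((k * (j : ℕ) + l : ℕ) : ℂ) - ((k * (i : ℕ) + l : ℕ) : ℂ)))
      = ((∏ i : Fin N, ∏ j ∈ Finset.Ioi i, (k * ((j : ℕ) - (i : ℕ))) : ℕ) : ℂ) := by
    rw [Nat.cast_prod]
    refine Finset.prod_congr rfl fun i _ => ?_
    rw [Nat.cast_prod]
    refine Finset.prod_congr rfl fun j hj => ?_
    have hij : (i : ℕ) ≤ (j : ℕ) := le_of_lt (Fin.lt_iff_val_lt_val.mp (Finset.mem_Ioi.mp hj))
    push_cast [Nat.cast_sub hij]
    ring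
  have hhalf : N * (N - 1) / 2 = S := by
    have := Finset.sum_range_id_mul_two N
    omega
  -- the coefficient of W at D is 1
  have hW1 : (WPoly m k l N).coeff D = 1 := by
    rw [hW, Polynomial.coeff_C_mul, hdetM_coeff, hLvan, hpair, T_eq k N]
    rw [cConst, hhalf, ← hSdef]
    have hfinP : (∏ b : Fin N, ((Nat.factorial (k * (b : ℕ) + l) : ℂ))⁻¹)
        = (∏ i ∈ Finset.range N, ((Nat.factorial (k * i + l) : ℂ)))⁻¹ := by
      rw [Fin.prod_univ_eq_prod_range (fun b => ((Nat.factorial (k * b + l) : ℂ))⁻¹) N,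
        Finset.prod_inv_distrib]
    rw [hfinP, Finset.prod_div_distrib]
    push_cast
    have hP : (∏ i ∈ Finset.range N, ((Nat.factorial (k * i + l) : ℂ))) ≠ 0 :=
      Finset.prod_ne_zero_iff.mpr fun i _ => by exact_mod_cast Nat.factorial_ne_zero _
    have hQ : (∏ i ∈ Finset.range N, ((Nat.factorial i : ℂ))) ≠ 0 :=
      Finset.prod_ne_zero_iff.mpr fun i _ => by exact_mod_cast Nat.factorial_ne_zero _
    have hkS : ((k : ℂ)) ^ S ≠ 0 := pow_ne_zero _ (Nat.cast_ne_zero.mpr (by omega))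
    field_simp
  have hWdeg_le : (WPoly m k l N).natDegree ≤ D := by
    rw [hW]
    refine (Polynomial.natDegree_mul_le).trans ?_
    simpa [Polynomial.natDegree_C] using hdetM_deg
  have hWdeg : (WPoly m k l N).natDegree = D :=
    le_antisymm hWdeg_le (Polynomial.le_natDegree_of_ne_zero (by rw [hW1]; exact one_ne_zero))
  constructor
  · rw [Polynomial.Monic, Polynomial.leadingCoeff, hWdeg, hW1]
  · rw [hWdeg, gamma_arith k l N hk1]
end

section
/- Let m, k, l, N be positive integers with m > 1 and 1 ≤ l < k. For every b ∈ ℂ with b^m = 1 and every z ∈ ℂ, one has W_N^{[m,k,l]}(bz) = b^Γ · W_N^{[m,k,l]}(z), where Γ = N((k−1)(N−1)+2l)/2. -/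
open scoped BigOperators

lemma pPoly_scale (m : ℕ) (b z : ℂ) (hb : b ^ m = 1) (j : ℤ) :
    (pPoly m j).eval (b * z) = b ^ j.toNat * (pPoly m j).eval z := by
  unfold pPoly
  split_ifs with h
  · simp only [Polynomial.eval_finset_sum, Polynomial.eval_mul, Polynomial.eval_C,
      Polynomial.eval_pow, Polynomial.eval_X, Finset.mul_sum]
    refine Finset.sum_congr rfl fun i hi => ?_
    have him : i * m ≤ j.toNat := by
      have hi' : i ≤ j.toNat / m := Nat.lt_succ_iff.mp (Finset.mem_range.mp hi)
      calc i * m ≤ (j.toNat / m) * m := Nat.mul_le_mul_right _ hi'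
        _ ≤ j.toNat := Nat.div_mul_le_self _ _
    have hbm : b ^ (i * m) = 1 := by rw [mul_comm, pow_mul, hb, one_pow]
    have hbe : b ^ (j.toNat - i * m) = b ^ j.toNat := by
      have : b ^ j.toNat = b ^ (j.toNat - i * m) * b ^ (i * m) := by
        rw [← pow_add, Nat.sub_add_cancel him]
      rw [this, hbm, mul_one]
    rw [mul_pow, hbe]; ring
  · simp

/-- For positive integers `m, k, l, N` with `m > 1` and `1 ≤ l < k`, and any `m`-th root of
unity `b`, we have `W_N^{[m,k,l]}(bz) = b^Γ · W_N^{[m,k,l]}(z)` with `Γ = N((k-1)(N-1)+2l)/2`. -/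
theorem wronskianHermite_rootOfUnity_scaling
    (m k l N : ℕ) (hm : 1 < m) (hl : 1 ≤ l) (hlk : l < k) (hN : 0 < N) :
    ∀ b z : ℂ, b ^ m = 1 →
      (WPoly m k l N).eval (b * z) =
        b ^ (N * ((k - 1) * (N - 1) + 2 * l) / 2) * (WPoly m k l N).eval z := by
  intro b z hb
  have hb0 : b ≠ 0 := by
    intro h
    rw [h, zero_pow (by omega : m ≠ 0)] at hb
    exact zero_ne_one hb
  set M : Matrix (Fin N) (Fin N) (Polynomial ℂ) := Matrix.of fun i j : Fin N =>
      pPoly m (((k * (j : ℕ) + l : ℕ) : ℤ) - ((i : ℕ) : ℤ)) with hM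
  have hdet : ∀ w : ℂ, M.det.eval w =
      (Matrix.of fun i j : Fin N => (M i j).eval w).det := by
    intro w
    have := RingHom.map_det (Polynomial.evalRingHom w) M
    simpa [Matrix.of, RingHom.mapMatrix_apply, Matrix.map] using this
  -- entrywise scaling
  have hentry : ∀ i j : Fin N,
      (M i j).eval (b * z) =
        b ^ (k * (j : ℕ) + l) * ((b⁻¹) ^ (i : ℕ) * (M i j).eval z) := by
    intro i j
    rw [hM]
    simp only [Matrix.of_apply]
    rw [pPoly_scale m b z hb]
    by_cases hij : (i : ℕ) ≤ k * (j : ℕ) + l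
    · rw [Int.toNat_sub]
      rw [pow_sub₀ b hb0 hij, inv_pow]
      ring
    · have hneg : (((k * (j : ℕ) + l : ℕ) : ℤ) - ((i : ℕ) : ℤ)) < 0 := by
        omega
      rw [pPoly, if_neg (by omega)]
      simp
  have hdet2 : M.det.eval (b * z) =
      ((∏ j : Fin N, b ^ (k * (j : ℕ) + l)) * ((∏ i : Fin N, (b⁻¹) ^ (i : ℕ)) *
        M.det.eval z)) := by
    rw [hdet (b * z), hdet z]
    have : (Matrix.of fun i j : Fin N => (M i j).eval (b * z)) =
        Matrix.of fun i j : Fin N => (fun j : Fin N => b ^ (k * (j : ℕ) + l)) j *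
          (Matrix.of fun i j : Fin N => (b⁻¹) ^ (i : ℕ) * (M i j).eval z) i j := by
      ext i j
      simpa using hentry i j
    rw [this, Matrix.det_mul_row]
    have h2 := Matrix.det_mul_column (fun i : Fin N => (b⁻¹) ^ (i : ℕ))
      (Matrix.of fun i j : Fin N => (M i j).eval z)
    congr 1
  -- compute scalar: product of powers
  have hS : (∏ j : Fin N, b ^ (k * (j : ℕ) + l)) = b ^ (k * (N * (N - 1) / 2) + N * l) := by
    rw [Finset.prod_pow_eq_pow_sum]
    congr 1
    rw [Fin.sum_univ_eq_sum_range (fun j => k * j + l)]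
    rw [Finset.sum_add_distrib, ← Finset.mul_sum, Finset.sum_const, Finset.card_range,
      smul_eq_mul]
    have hsum : ∑ i ∈ Finset.range N, i = N * (N - 1) / 2 := by
      have := Finset.sum_range_id_mul_two N
      omega
    rw [hsum]
  have hT : (∏ i : Fin N, (b⁻¹) ^ (i : ℕ)) = (b ^ (N * (N - 1) / 2))⁻¹ := by
    rw [Finset.prod_pow_eq_pow_sum, Fin.sum_univ_eq_sum_range (fun i => i)]
    rw [inv_pow]
    have hsum : ∑ i ∈ Finset.range N, i = N * (N - 1) / 2 := by
      have := Finset.sum_range_id_mul_two N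
      omega
    rw [hsum]
  have hGamma : N * ((k - 1) * (N - 1) + 2 * l) / 2 = (k - 1) * (N * (N - 1) / 2) + N * l := by
    have h2 : 2 ∣ N * (N - 1) := by
      rcases Nat.even_or_odd N with h | h
      · exact Dvd.dvd.mul_right h.two_dvd _
      · exact Dvd.dvd.mul_left (Nat.Odd.sub_odd h odd_one).two_dvd _
    obtain ⟨G, hG⟩ := h2
    have hG2 : N * (N - 1) / 2 = G := by omega
    have hkey : N * ((k - 1) * (N - 1) + 2 * l) = 2 * ((k - 1) * G + N * l) := by
      calc N * ((k - 1) * (N - 1) + 2 * l) = (k - 1) * (N * (N - 1)) + 2 * (N * l) := by ring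
        _ = 2 * ((k - 1) * G + N * l) := by rw [hG]; ring
    rw [hG2, hkey]
    omega
  have hfinal : (∏ j : Fin N, b ^ (k * (j : ℕ) + l)) * (∏ i : Fin N, (b⁻¹) ^ (i : ℕ)) =
      b ^ (N * ((k - 1) * (N - 1) + 2 * l) / 2) := by
    rw [hS, hT, hGamma]
    have hle : N * (N - 1) / 2 ≤ k * (N * (N - 1) / 2) + N * l :=
      le_add_right (Nat.le_mul_of_pos_left _ (by omega))
    rw [← pow_sub₀ b hb0 hle]
    congr 1
    obtain ⟨K, rfl⟩ : ∃ K, k = K + 1 := ⟨k - 1, by omega⟩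
    have e1 : (K + 1) * (N * (N - 1) / 2) = K * (N * (N - 1) / 2) + N * (N - 1) / 2 := by ring
    have e2 : K + 1 - 1 = K := rfl
    rw [e2]
    omega
  -- assemble
  rw [WPoly, Polynomial.eval_mul, Polynomial.eval_mul, Polynomial.eval_C, Polynomial.eval_C,
    ← hM, hdet2, ← hfinal]
  ring
end

section
/- Let m, k, l, N be positive integers with m > 1 and 1 ≤ l < k. If z_0 ∈ ℂ is a root of W_N^{[m,k,l]}, then for every m-th root of unity ζ (in particular ζ = e^{2πij/m} for each j = 0,1,…,m−1), the point ζ·z_0 is also a root of W_N^{[m,k,l]}. -/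
open scoped BigOperators

lemma zeta_ne_zero {m : ℕ} (hm : 0 < m) {ζ : ℂ} (hζ : ζ ^ m = 1) : ζ ≠ 0 := by
  intro h
  rw [h, zero_pow hm.ne'] at hζ
  exact zero_ne_one hζ

lemma pPoly_eval_rotate (m : ℕ) {ζ : ℂ} (hζ : ζ ^ m = 1) (z : ℂ) (j : ℤ) :
    Polynomial.eval (ζ * z) (pPoly m j) = ζ ^ j.toNat * Polynomial.eval z (pPoly m j) := by
  unfold pPoly
  split_ifs with h
  · simp only [Polynomial.eval_finset_sum, Polynomial.eval_mul, Polynomial.eval_C,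
      Polynomial.eval_pow, Polynomial.eval_X, mul_pow, Finset.mul_sum]
    refine Finset.sum_congr rfl fun t ht => ?_
    have htm : t * m ≤ j.toNat := by
      have h1 : t ≤ j.toNat / m := Nat.lt_succ_iff.mp (Finset.mem_range.mp ht)
      calc t * m ≤ (j.toNat / m) * m := Nat.mul_le_mul_right _ h1
        _ ≤ j.toNat := Nat.div_mul_le_self _ _
    have hz : ζ ^ (j.toNat - t * m) = ζ ^ j.toNat := by
      have h2 : ζ ^ j.toNat = ζ ^ (j.toNat - t * m) * (ζ ^ m) ^ t := by
        rw [← pow_mul, ← pow_add]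
        congr 1
        rw [mul_comm m t]
        omega
      rw [h2, hζ, one_pow, mul_one]
    rw [hz]; ring
  · simp

lemma pPoly_eval_rotate' (m : ℕ) (hm : 0 < m) {ζ : ℂ} (hζ : ζ ^ m = 1) (z : ℂ) (n i : ℕ) :
    Polynomial.eval (ζ * z) (pPoly m ((n : ℤ) - (i : ℤ))) =
      ζ ^ n * (ζ⁻¹ ^ i * Polynomial.eval z (pPoly m ((n : ℤ) - (i : ℤ)))) := by
  have hζ0 : ζ ≠ 0 := zeta_ne_zero hm hζ
  by_cases h : i ≤ n
  · rw [pPoly_eval_rotate m hζ]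
    have htn : ((n : ℤ) - (i : ℤ)).toNat = n - i := by omega
    rw [htn]
    have h1 : ζ ^ n = ζ ^ (n - i) * ζ ^ i := by rw [← pow_add, Nat.sub_add_cancel h]
    have h2 : ζ ^ i * ζ⁻¹ ^ i = 1 := by
      rw [← mul_pow, mul_inv_cancel₀ hζ0, one_pow]
    calc ζ ^ (n - i) * Polynomial.eval z (pPoly m ((n : ℤ) - (i : ℤ)))
        = ζ ^ (n - i) * (ζ ^ i * ζ⁻¹ ^ i) * Polynomial.eval z (pPoly m ((n : ℤ) - (i : ℤ))) := by
          rw [h2, mul_one]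
      _ = ζ ^ n * (ζ⁻¹ ^ i * Polynomial.eval z (pPoly m ((n : ℤ) - (i : ℤ)))) := by
          rw [h1]; ring
  · have hneg : (n : ℤ) - (i : ℤ) < 0 := by omega
    unfold pPoly
    rw [if_neg (not_le.mpr hneg)]
    simp

/-- For positive integers `m, k, l, N` with `m > 1` and `1 ≤ l < k`, if `z₀` is a root of
`W_N^{[m,k,l]}` and `ζ` is an `m`-th root of unity, then `ζ·z₀` is also a root. -/
theorem wronskianHermite_root_rotation
    (m k l N : ℕ) (hm : 1 < m) (hl : 1 ≤ l) (hlk : l < k) (hN : 0 < N)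
    (z₀ : ℂ) (hz₀ : (WPoly m k l N).IsRoot z₀) (ζ : ℂ) (hζ : ζ ^ m = 1) :
    (WPoly m k l N).IsRoot (ζ * z₀) := by
  have hm0 : 0 < m := by omega
  unfold Polynomial.IsRoot WPoly at hz₀ ⊢
  rw [Polynomial.eval_mul, Polynomial.eval_C] at hz₀ ⊢
  set M : Matrix (Fin N) (Fin N) (Polynomial ℂ) :=
    Matrix.of fun i j : Fin N =>
      pPoly m (((k * (j : ℕ) + l : ℕ) : ℤ) - ((i : ℕ) : ℤ)) with hM
  have key : ∀ w : ℂ, Polynomial.eval w M.det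
      = Matrix.det (Matrix.of fun i j : Fin N =>
          Polynomial.eval w (pPoly m (((k * (j : ℕ) + l : ℕ) : ℤ) - ((i : ℕ) : ℤ)))) := by
    intro w
    rw [show (Polynomial.eval w M.det) = (Polynomial.evalRingHom w) M.det from rfl,
      RingHom.map_det]
    rfl
  rw [key] at hz₀ ⊢
  have hrw : (Matrix.of fun i j : Fin N =>
      Polynomial.eval (ζ * z₀) (pPoly m (((k * (j : ℕ) + l : ℕ) : ℤ) - ((i : ℕ) : ℤ))))
      = Matrix.of fun i j : Fin N => (fun j : Fin N => ζ ^ (k * (j : ℕ) + l)) j *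
          (Matrix.of fun i j : Fin N => (fun i : Fin N => ζ⁻¹ ^ (i : ℕ)) i *
            (Matrix.of fun i j : Fin N =>
              Polynomial.eval z₀ (pPoly m (((k * (j : ℕ) + l : ℕ) : ℤ) - ((i : ℕ) : ℤ)))) i j) i j := by
    ext i j
    simp only [Matrix.of_apply]
    rw [show (((k * (j : ℕ) + l : ℕ) : ℤ) - ((i : ℕ) : ℤ))
        = ((k * (j : ℕ) + l : ℕ) : ℤ) - ((i : ℕ) : ℤ) from rfl]
    exact pPoly_eval_rotate' m hm0 hζ z₀ (k * (j : ℕ) + l) (i : ℕ)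
  rw [hrw, Matrix.det_mul_row, Matrix.det_mul_column]
  linear_combination ((∏ i : Fin N, ζ ^ (k * (i : ℕ) + l)) * ∏ i : Fin N, ζ⁻¹ ^ (i : ℕ)) * hz₀
end

section
/- Let m, k, l, N be positive integers with m > 1 and 1 ≤ l < k. If k divides m, then W_N^{[m,k,l]}(z) = z^Γ, where Γ = N((k−1)(N−1)+2l)/2. -/
open scoped BigOperators

noncomputable def qPoly : ℤ → Polynomial ℂ := fun r =>
  if 0 ≤ r then Polynomial.C ((r.toNat.factorial : ℂ))⁻¹ * Polynomial.X ^ r.toNat else 0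

lemma qPoly_neg {r : ℤ} (h : r < 0) : qPoly r = 0 := if_neg (not_le.2 h)

lemma qPoly_nat (n : ℕ) :
    qPoly (n : ℤ) = Polynomial.C ((n.factorial : ℂ))⁻¹ * Polynomial.X ^ n := by
  simp [qPoly]

lemma pPoly_eq_sum (m : ℕ) (hm : 0 < m) (z : ℤ) (R : ℕ)
    (hR : z < 0 ∨ z.toNat / m + 1 ≤ R) :
    pPoly m z = ∑ s ∈ Finset.range R,
      Polynomial.C ((s.factorial : ℂ))⁻¹ * qPoly (z - (s : ℤ) * (m : ℤ)) := by
  rcases lt_or_ge z 0 with hz | hz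
  · rw [pPoly, if_neg (not_le.2 hz)]
    refine (Finset.sum_eq_zero fun s _ => ?_).symm
    have h1 : (0:ℤ) ≤ (s:ℤ) * m := by positivity
    rw [qPoly_neg (by omega), mul_zero]
  · obtain hR := hR.resolve_left (not_lt.2 hz)
    rw [pPoly, if_pos hz]
    rw [← Finset.sum_subset (Finset.range_subset_range.2 hR) ?h1]
    case h1 =>
      intro s _ hs
      simp only [Finset.mem_range, not_lt] at hs
      have h1 : z.toNat < s * m :=
        lt_of_lt_of_le ((Nat.div_lt_iff_lt_mul hm).1 (Nat.lt_succ_self _))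
          (Nat.mul_le_mul_right m hs)
      have h2 : ((s * m : ℕ) : ℤ) = (s:ℤ) * m := by push_cast; ring
      have h5 : ((z.toNat:ℕ) : ℤ) < ((s * m : ℕ) : ℤ) := by exact_mod_cast h1
      have h6 : ((z.toNat:ℕ) : ℤ) = z := Int.toNat_of_nonneg hz
      rw [qPoly_neg (by omega), mul_zero]
    · refine Finset.sum_congr rfl fun s hs => ?_
      simp only [Finset.mem_range] at hs
      have hsm : s * m ≤ z.toNat := by
        calc s * m ≤ z.toNat / m * m := Nat.mul_le_mul_right m (by omega)
        _ ≤ z.toNat := Nat.div_mul_le_self _ _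
      have h2 : ((s * m : ℕ) : ℤ) = (s:ℤ) * m := by push_cast; ring
      have h5 : ((s*m:ℕ) : ℤ) ≤ ((z.toNat:ℕ) : ℤ) := by exact_mod_cast hsm
      have h6 : ((z.toNat:ℕ) : ℤ) = z := Int.toNat_of_nonneg hz
      have h3 : z - (s:ℤ) * m = ((z.toNat - s * m : ℕ) : ℤ) := by
        push_cast [Nat.cast_sub hsm]; omega
      rw [h3, qPoly_nat, ← mul_assoc, ← Polynomial.C_mul]
      congr 2
      push_cast [mul_inv]
      ring

/-- For positive integers `m, k, l, N` with `m > 1` and `1 ≤ l < k`, if `k ∣ m` then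
`W_N^{[m,k,l]}(z) = z^Γ` with `Γ = N((k-1)(N-1)+2l)/2`. -/
theorem wronskianHermite_eq_monomial_of_dvd
    (m k l N : ℕ) (hm : 1 < m) (hl : 1 ≤ l) (hlk : l < k) (hN : 0 < N) (hkm : k ∣ m) :
    WPoly m k l N = Polynomial.X ^ (N * ((k - 1) * (N - 1) + 2 * l) / 2) := by
  classical
  obtain ⟨m', rfl⟩ := hkm
  have hk : 0 < k := lt_of_le_of_lt (Nat.zero_le l) hlk
  have hm' : 0 < m' := by
    rcases Nat.eq_zero_or_pos m' with h | h
    · subst h; simp at hm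
    · exact h
  set Snat := N * (N - 1) / 2 with hSnat
  have h2S : 2 * Snat = N * (N - 1) := by
    have h1 := Finset.sum_range_id_mul_two N
    have h2 := Finset.sum_range_id N
    omega
  set G := (k - 1) * Snat + N * l with hG
  have hGexp : N * ((k - 1) * (N - 1) + 2 * l) / 2 = G := by
    have h1 : N * ((k - 1) * (N - 1) + 2 * l) = 2 * G := by
      calc N * ((k - 1) * (N - 1) + 2 * l) = (k - 1) * (N * (N - 1)) + 2 * (N * l) := by ring
      _ = (k - 1) * (2 * Snat) + 2 * (N * l) := by rw [h2S]
      _ = 2 * G := by rw [hG]; ring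
    omega
  -- the matrices
  set Q : Matrix (Fin N) (Fin N) (Polynomial ℂ) :=
    Matrix.of (fun i j : Fin N => qPoly (((k * (j : ℕ) + l : ℕ) : ℤ) - ((i : ℕ) : ℤ))) with hQ
  set T : Matrix (Fin N) (Fin N) (Polynomial ℂ) :=
    Matrix.of (fun t j : Fin N =>
      if (t : ℕ) ≤ (j : ℕ) ∧ m' ∣ ((j : ℕ) - (t : ℕ)) then
        Polynomial.C (((((j : ℕ) - (t : ℕ)) / m').factorial : ℂ))⁻¹ else 0) with hT
  have hQT : (Matrix.of fun i j : Fin N =>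
      pPoly (k * m') (((k * (j : ℕ) + l : ℕ) : ℤ) - ((i : ℕ) : ℤ))) = Q * T := by
    refine Matrix.ext fun i j => ?_
    rw [Matrix.mul_apply, Matrix.of_apply]
    have hz' : ((k * (j:ℕ) + l : ℕ) : ℤ) - ((i:ℕ) : ℤ) < 0 ∨
        (((k * (j:ℕ) + l : ℕ) : ℤ) - ((i:ℕ) : ℤ)).toNat / (k * m') + 1 ≤ (j:ℕ)/m' + 1 := by
      set z := ((k * (j:ℕ) + l : ℕ) : ℤ) - ((i:ℕ) : ℤ) with hzdef
      rcases lt_or_ge z 0 with h | h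
      · exact Or.inl h
      · right
        have hzn : (z.toNat : ℤ) = z := Int.toNat_of_nonneg h
        have hle : z.toNat ≤ k * (j:ℕ) + l := by omega
        have hdm : z.toNat / (k*m') * (k*m') ≤ z.toNat := Nat.div_mul_le_self _ _
        set s := z.toNat / (k*m') with hs
        have hsm : s ≤ (j:ℕ) / m' := by
          rw [Nat.le_div_iff_mul_le hm']
          by_contra hc
          push_neg at hc
          have h1 : ((j:ℕ)+1) * k ≤ s * m' * k := Nat.mul_le_mul_right k hc
          have h2 : s * m' * k = s * (k * m') := by ring
          have h3 : ((j:ℕ)+1) * k = k * (j:ℕ) + k := by ring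
          omega
        omega
    rw [pPoly_eq_sum (k*m') (by positivity) _ ((j:ℕ)/m' + 1) hz']
    simp only [hQ, hT, Matrix.of_apply, mul_ite, mul_zero]
    have hfilter : (∑ t : Fin N, if (t:ℕ) ≤ (j:ℕ) ∧ m' ∣ ((j:ℕ) - (t:ℕ)) then
        qPoly (((k * (t:ℕ) + l : ℕ) : ℤ) - ((i:ℕ) : ℤ)) *
          Polynomial.C (((((j:ℕ) - (t:ℕ)) / m').factorial : ℂ))⁻¹ else 0)
        = ∑ t ∈ Finset.univ.filter (fun t : Fin N => (t:ℕ) ≤ (j:ℕ) ∧ m' ∣ ((j:ℕ) - (t:ℕ))),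
        qPoly (((k * (t:ℕ) + l : ℕ) : ℤ) - ((i:ℕ) : ℤ)) *
          Polynomial.C (((((j:ℕ) - (t:ℕ)) / m').factorial : ℂ))⁻¹ := (Finset.sum_filter _ _).symm
    rw [hfilter]
    refine Finset.sum_nbij'
      (fun s => (⟨(j:ℕ) - s * m', lt_of_le_of_lt (Nat.sub_le _ _) j.isLt⟩ : Fin N))
      (fun t => ((j:ℕ) - (t:ℕ)) / m') ?_ ?_ ?_ ?_ ?_
    · intro s hs
      simp only [Finset.mem_range] at hs
      have hsm : s * m' ≤ (j:ℕ) := (Nat.le_div_iff_mul_le hm').1 (by omega)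
      simp only [Finset.mem_filter, Finset.mem_univ, true_and]
      constructor
      · exact Nat.sub_le _ _
      · rw [Nat.sub_sub_self hsm]
        exact dvd_mul_left m' s
    · intro t ht
      simp only [Finset.mem_filter, Finset.mem_univ, true_and] at ht
      simp only [Finset.mem_range]
      have := Nat.div_le_div_right (c := m') (Nat.sub_le (j:ℕ) (t:ℕ))
      omega
    · intro s hs
      simp only [Finset.mem_range] at hs
      have hsm : s * m' ≤ (j:ℕ) := (Nat.le_div_iff_mul_le hm').1 (by omega)
      show ((j:ℕ) - ((j:ℕ) - s * m')) / m' = s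
      rw [Nat.sub_sub_self hsm, Nat.mul_div_cancel _ hm']
    · intro t ht
      simp only [Finset.mem_filter, Finset.mem_univ, true_and] at ht
      obtain ⟨hle, hdvd⟩ := ht
      apply Fin.ext
      show (j:ℕ) - ((j:ℕ) - (t:ℕ)) / m' * m' = (t:ℕ)
      rw [Nat.div_mul_cancel hdvd, Nat.sub_sub_self hle]
    · intro s hs
      simp only [Finset.mem_range] at hs
      have hsm : s * m' ≤ (j:ℕ) := (Nat.le_div_iff_mul_le hm').1 (by omega)
      show Polynomial.C ((s.factorial : ℂ))⁻¹ *
          qPoly (((k * (j:ℕ) + l : ℕ) : ℤ) - ((i:ℕ) : ℤ) - (s:ℤ) * ((k * m' : ℕ) : ℤ)) =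
        qPoly (((k * ((j:ℕ) - s * m') + l : ℕ) : ℤ) - ((i:ℕ) : ℤ)) *
          Polynomial.C (((((j:ℕ) - ((j:ℕ) - s * m')) / m').factorial : ℂ))⁻¹
      rw [Nat.sub_sub_self hsm, Nat.mul_div_cancel _ hm']
      rw [mul_comm]
      congr 2
      have h1 : (↑(k * ((j:ℕ) - s * m') + l) : ℤ) = k * ((j:ℕ) : ℤ) - (s:ℤ) * (k * m') + l := by
        push_cast [Nat.cast_sub hsm]
        ring
      push_cast [h1]
      ring
  have hdetT : T.det = 1 := by
    have htri : T.BlockTriangular id := by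
      intro a b hab
      simp only [hT, Matrix.of_apply]
      rw [if_neg]
      rintro ⟨h1, -⟩
      exact absurd (Fin.le_def.2 h1) (not_le.2 hab)
    rw [Matrix.det_of_upperTriangular htri]
    refine Finset.prod_eq_one fun t _ => ?_
    simp [hT, Nat.sub_self]
  set d : Matrix (Fin N) (Fin N) ℂ :=
    Matrix.of (fun i j : Fin N =>
      (((k * (j : ℕ) + l).factorial : ℂ))⁻¹ * (((k * (j : ℕ) + l).descFactorial (i : ℕ) : ℕ) : ℂ))
    with hd
  have hS : ∑ t : Fin N, (((t : ℕ) : ℤ)) = (Snat : ℤ) := by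
    rw [Fin.sum_univ_eq_sum_range (fun x => (x : ℤ)) N, ← Nat.cast_sum]
    rw [Finset.sum_range_id N]
  have hGZ : (G : ℤ) = k * (Snat : ℤ) + N * l - Snat := by
    rw [hG]
    push_cast [Nat.cast_sub hk]
    ring
  have hdetQ : Q.det = Polynomial.C d.det * Polynomial.X ^ G := by
    rw [Matrix.det_apply, Matrix.det_apply, map_sum, Finset.sum_mul]
    refine Finset.sum_congr rfl fun σ _ => ?_
    have hprod : ∏ t, Q (σ t) t = Polynomial.C (∏ t, d (σ t) t) * Polynomial.X ^ G := by
      by_cases hcase : ∀ t : Fin N, (σ t : ℕ) ≤ k * (t : ℕ) + l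
      · have hprod1 : ∀ t : Fin N, Q (σ t) t =
            Polynomial.C (d (σ t) t) * Polynomial.X ^ (k * (t : ℕ) + l - (σ t : ℕ)) := by
          intro t
          have h1 : (σ t : ℕ) ≤ k * (t : ℕ) + l := hcase t
          have h2 : ((k * (t : ℕ) + l : ℕ) : ℤ) - (((σ t : Fin N) : ℕ) : ℤ)
              = ((k * (t : ℕ) + l - ((σ t : Fin N) : ℕ) : ℕ) : ℤ) := by
            rw [Nat.cast_sub h1]
          simp only [hQ, Matrix.of_apply]
          rw [h2, qPoly_nat]
          congr 1
          simp only [hd, Matrix.of_apply]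
          have h3 : (k * (t : ℕ) + l - (σ t : ℕ)).factorial *
              ((k * (t : ℕ) + l).descFactorial (σ t : ℕ)) = (k * (t : ℕ) + l).factorial :=
            Nat.factorial_mul_descFactorial h1
          have hcast : ((k * (t : ℕ) + l).factorial : ℂ) =
              ((k * (t : ℕ) + l - (σ t : ℕ)).factorial : ℂ) *
                (((k * (t : ℕ) + l).descFactorial (σ t : ℕ) : ℕ) : ℂ) := by
            exact_mod_cast congrArg (Nat.cast (R := ℂ)) h3.symm
          congr 1
          rw [hcast]
          have hf1 : ((k * (t : ℕ) + l - (σ t : ℕ)).factorial : ℂ) ≠ 0 := by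
            exact_mod_cast (Nat.factorial_pos _).ne'
          have hf2 : (((k * (t : ℕ) + l).descFactorial (σ t : ℕ) : ℕ) : ℂ) ≠ 0 :=
            Nat.cast_ne_zero.2 fun h0 =>
              absurd (Nat.descFactorial_eq_zero_iff_lt.1 h0) (not_lt.2 h1)
          rw [mul_inv, mul_assoc, inv_mul_cancel₀ hf2, mul_one]
        rw [Finset.prod_congr rfl (fun t _ => hprod1 t), Finset.prod_mul_distrib,
          ← map_prod, Finset.prod_pow_eq_pow_sum]
        congr 2
        -- ∑ t, (k*t+l - σ t) = G
        have h4 : ((∑ t : Fin N, (k * (t : ℕ) + l - (σ t : ℕ)) : ℕ) : ℤ) = (G : ℤ) := by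
          rw [Nat.cast_sum]
          have h5 : ∀ t : Fin N, ((k * (t : ℕ) + l - (σ t : ℕ) : ℕ) : ℤ)
              = k * ((t : ℕ) : ℤ) + l - ((σ t : ℕ) : ℤ) := by
            intro t
            rw [Nat.cast_sub (hcase t)]
            push_cast
            ring
          rw [Finset.sum_congr rfl (fun t _ => h5 t)]
          have h6 : ∑ t : Fin N, (((σ t : ℕ) : ℤ)) = (Snat : ℤ) := by
            rw [← hS]
            exact Equiv.sum_comp σ (fun t : Fin N => ((t : ℕ) : ℤ))
          rw [Finset.sum_sub_distrib, h6, Finset.sum_add_distrib, ← Finset.mul_sum, hS,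
            Finset.sum_const, Finset.card_univ, Fintype.card_fin, hGZ]
          push_cast
          ring
        exact_mod_cast h4
      · push_neg at hcase
        obtain ⟨t, ht⟩ := hcase
        have hQ0 : Q (σ t) t = 0 := by
          simp only [hQ, Matrix.of_apply]
          apply qPoly_neg
          have h7 : ((k * (t : ℕ) + l : ℕ) : ℤ) < ((σ t : ℕ) : ℤ) := by exact_mod_cast ht
          omega
        have hd0 : d (σ t) t = 0 := by
          simp only [hd, Matrix.of_apply]
          rw [Nat.descFactorial_eq_zero_iff_lt.2 ht]
          simp
        have h8 : ∏ x : Fin N, Q (σ x) x = 0 := Finset.prod_eq_zero (Finset.mem_univ t) hQ0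
        have h9 : ∏ x : Fin N, d (σ x) x = 0 := Finset.prod_eq_zero (Finset.mem_univ t) hd0
        rw [h8, h9, map_zero, zero_mul]
    rw [hprod, Units.smul_def, Units.smul_def, map_zsmul, smul_mul_assoc]
  have hddet : d.det = (∏ x ∈ Finset.range N, (((k * x + l).factorial : ℂ))⁻¹) *
      ((k : ℂ) ^ Snat * ∏ x ∈ Finset.range N, ((x.factorial : ℕ) : ℂ)) := by
    have h2 : d.det = (∏ j : Fin N, (((k * (j : ℕ) + l).factorial : ℂ))⁻¹) *
        (Matrix.of fun i j : Fin N =>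
          (((k * (j : ℕ) + l).descFactorial (i : ℕ) : ℕ) : ℂ)).det :=
      Matrix.det_mul_row (fun j : Fin N => (((k * (j : ℕ) + l).factorial : ℂ))⁻¹) _
    have h3 : (Matrix.of fun i j : Fin N =>
        (((k * (j : ℕ) + l).descFactorial (i : ℕ) : ℕ) : ℂ)).det
        = (Matrix.of fun i j : Fin N =>
            (descPochhammer ℂ (j : ℕ)).eval (((k * (i : ℕ) + l : ℕ) : ℂ))).det := by
      rw [← Matrix.det_transpose]
      congr 1
      refine Matrix.ext fun i j => ?_
      simp only [Matrix.transpose_apply, Matrix.of_apply]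
      rw [descPochhammer_eval_eq_descFactorial]
    have h4 : (Matrix.of fun i j : Fin N =>
          (descPochhammer ℂ (j : ℕ)).eval (((k * (i : ℕ) + l : ℕ) : ℂ))).det
        = (Matrix.vandermonde (fun i : Fin N => ((k * (i : ℕ) + l : ℕ) : ℂ))).det :=
      (Matrix.det_eval_matrixOfPolynomials_eq_det_vandermonde _ _
        (fun i => descPochhammer_natDegree ℂ (i : ℕ))
        (fun i => monic_descPochhammer ℂ (i : ℕ))).symm
    have h5 : (Matrix.vandermonde (fun i : Fin N => ((k * (i : ℕ) + l : ℕ) : ℂ))).det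
        = (k : ℂ) ^ Snat * ∏ x ∈ Finset.range N, ((x.factorial : ℕ) : ℂ) := by
      rw [Matrix.det_vandermonde]
      have h6 : ∀ i : Fin N, ∀ j ∈ Finset.Ioi i,
          ((k * (j : ℕ) + l : ℕ) : ℂ) - ((k * (i : ℕ) + l : ℕ) : ℂ)
            = (k : ℂ) * (((j : ℕ) : ℂ) - ((i : ℕ) : ℂ)) := by
        intro i j _
        push_cast
        ring
      rw [Finset.prod_congr rfl (fun i _ => Finset.prod_congr rfl (h6 i))]
      have h7 : ∀ i : Fin N, ∏ j ∈ Finset.Ioi i, ((k : ℂ) * (((j : ℕ) : ℂ) - ((i : ℕ) : ℂ)))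
          = (k : ℂ) ^ (N - 1 - (i : ℕ)) *
            ∏ j ∈ Finset.Ioi i, (((j : ℕ) : ℂ) - ((i : ℕ) : ℂ)) := by
        intro i
        rw [Finset.prod_mul_distrib, Finset.prod_const, Fin.card_Ioi]
      rw [Finset.prod_congr rfl (fun i _ => h7 i), Finset.prod_mul_distrib]
      congr 1
      · rw [Finset.prod_pow_eq_pow_sum]
        congr 1
        rw [Fin.sum_univ_eq_sum_range (fun x => N - 1 - x) N,
          Finset.sum_range_reflect (fun x => x) N]
        exact Finset.sum_range_id N
      · -- superfactorial part
        obtain ⟨n, rfl⟩ : ∃ n, N = n + 1 := ⟨N - 1, by omega⟩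
        have h8 : ∏ i : Fin (n+1), ∏ j ∈ Finset.Ioi i, (((j : ℕ) : ℂ) - ((i : ℕ) : ℂ))
            = (Matrix.vandermonde (fun i : Fin (n+1) => ((i : ℕ) : ℂ))).det :=
          (Matrix.det_vandermonde _).symm
        rw [h8]
        have h9 := Matrix.det_vandermonde_id_eq_superFactorial (R := ℂ) n
        rw [h9, ← Nat.prod_range_succ_factorial n, Nat.cast_prod]
    rw [h2, h3, h4, h5, Fin.prod_univ_eq_prod_range (fun x => (((k * x + l).factorial : ℂ))⁻¹) N]
  have hscalar : cConst k l N * d.det = 1 := by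
    have hkc : (k : ℂ) ≠ 0 := Nat.cast_ne_zero.2 hk.ne'
    have hfac : ∀ x : ℕ, ((x.factorial : ℕ) : ℂ) ≠ 0 :=
      fun x => Nat.cast_ne_zero.2 (Nat.factorial_pos x).ne'
    rw [hddet, cConst, ← hSnat]
    have hprod1 : (∏ x ∈ Finset.range N,
          (((k * x + l).factorial : ℂ) / ((x.factorial : ℕ) : ℂ))) *
        ((∏ x ∈ Finset.range N, (((k * x + l).factorial : ℂ))⁻¹) *
          ∏ x ∈ Finset.range N, ((x.factorial : ℕ) : ℂ)) = 1 := by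
      rw [← Finset.prod_mul_distrib, ← Finset.prod_mul_distrib]
      refine Finset.prod_eq_one fun x _ => ?_
      have h1 := hfac x
      have h2 := hfac (k * x + l)
      field_simp
    calc ((k : ℂ) ^ Snat)⁻¹ *
          (∏ x ∈ Finset.range N, (((k * x + l).factorial : ℂ) / ((x.factorial : ℕ) : ℂ))) *
          ((∏ x ∈ Finset.range N, (((k * x + l).factorial : ℂ))⁻¹) *
            ((k : ℂ) ^ Snat * ∏ x ∈ Finset.range N, ((x.factorial : ℕ) : ℂ)))
        = (((k : ℂ) ^ Snat)⁻¹ * (k : ℂ) ^ Snat) *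
          ((∏ x ∈ Finset.range N,
            (((k * x + l).factorial : ℂ) / ((x.factorial : ℕ) : ℂ))) *
          ((∏ x ∈ Finset.range N, (((k * x + l).factorial : ℂ))⁻¹) *
            ∏ x ∈ Finset.range N, ((x.factorial : ℕ) : ℂ))) := by ring
      _ = 1 := by rw [inv_mul_cancel₀ (pow_ne_zero _ hkc), hprod1, mul_one]
  rw [WPoly, hQT, Matrix.det_mul, hdetT, mul_one, hdetQ, hGexp, ← mul_assoc,
    ← Polynomial.C_mul, hscalar, Polynomial.C_1, one_mul]
end

section
/- Let m, k, l, N be positive integers with m > 1 and 1 ≤ l < k, and let c ∈ ℂ with c ≠ 0. Then for every z ∈ ℂ, W̄_N^{[m,k,l]}(z; c^m) = c^Γ · W_N^{[m,k,l]}(z/c), where Γ = N((k−1)(N−1)+2l)/2. In particular, every monomial a^i z^j occurring in W̄_N^{[m,k,l]}(z;a) satisfies im + j = Γ. -/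
open scoped BigOperators

/-- `Sfun m j z a = S_j^{[m]}(z;a) = ∑_{i=0}^{⌊j/m⌋} a^i z^{j-im}/(i!(j-im)!)` for `j ≥ 0`. -/
noncomputable def Sfun (m j : ℕ) (z a : ℂ) : ℂ :=
  ∑ i ∈ Finset.range (j / m + 1),
    a ^ i * z ^ (j - i * m) / ((Nat.factorial i : ℂ) * (Nat.factorial (j - i * m) : ℂ))

/-- `SfunInt` extends `Sfun` by `0` to negative indices `j`. -/
noncomputable def SfunInt (m : ℕ) (j : ℤ) (z a : ℂ) : ℂ :=
  if 0 ≤ j then Sfun m j.toNat z a else 0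

/-- `W̄_N^{[m,k,l]}(z;a) = c_N^{[m,k,l]} · det_{1≤i,j≤N}( S^{[m]}_{k(j-1)+l-i+1}(z;a) )`. -/
noncomputable def WbarFun (m k l N : ℕ) (z a : ℂ) : ℂ :=
  cConst k l N *
    Matrix.det (Matrix.of fun i j : Fin N =>
      SfunInt m (((k * (j : ℕ) + l : ℕ) : ℤ) - ((i : ℕ) : ℤ)) z a)

/-- `W_N^{[m,k,l]}(z) = W̄_N^{[m,k,l]}(z;1)`. -/
noncomputable def WFun (m k l N : ℕ) (z : ℂ) : ℂ := WbarFun m k l N z 1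

/-- `S_j^{[m]}(z;a)` as a bivariate polynomial: an element of `(ℂ[z])[a]`, the outer
variable being `a` and the inner one `z`; extended by `0` to negative `j`. -/
noncomputable def SbivPoly (m : ℕ) (j : ℤ) : Polynomial (Polynomial ℂ) :=
  if 0 ≤ j then
    ∑ i ∈ Finset.range (j.toNat / m + 1),
      Polynomial.C
        (Polynomial.C (((Nat.factorial i * Nat.factorial (j.toNat - i * m) : ℕ) : ℂ))⁻¹ *
          Polynomial.X ^ (j.toNat - i * m)) *
        Polynomial.X ^ i
  else 0

/-- `W̄_N^{[m,k,l]}(z;a)` as a bivariate polynomial in `(ℂ[z])[a]`. -/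
noncomputable def WbarPoly (m k l N : ℕ) : Polynomial (Polynomial ℂ) :=
  Polynomial.C (Polynomial.C (cConst k l N)) *
    Matrix.det (Matrix.of fun i j : Fin N =>
      SbivPoly m (((k * (j : ℕ) + l : ℕ) : ℤ) - ((i : ℕ) : ℤ)))

/-- Weighted homogeneity: every monomial `a^i z^j` of `P` satisfies `i*m + j = w`. -/
def IsWt (m : ℕ) (w : ℤ) (P : Polynomial (Polynomial ℂ)) : Prop :=
  ∀ i j : ℕ, (P.coeff i).coeff j ≠ 0 → ((i : ℤ) * m + j : ℤ) = w

lemma isWt_congr {m : ℕ} {w w' : ℤ} {P : Polynomial (Polynomial ℂ)}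
    (h : IsWt m w P) (hw : w = w') : IsWt m w' P := hw ▸ h

lemma isWt_zero (m : ℕ) (w : ℤ) : IsWt m w (0 : Polynomial (Polynomial ℂ)) := by
  intro i j h; simp at h

lemma isWt_C (m : ℕ) (r : ℂ) : IsWt m 0 (Polynomial.C (Polynomial.C r)) := by
  intro i j h
  by_cases hi : i = 0
  · subst hi
    by_cases hj : j = 0
    · subst hj; push_cast; ring
    · simp [Polynomial.coeff_C, hj] at h
  · simp [Polynomial.coeff_C, hi] at h

lemma isWt_mul {m : ℕ} {w v : ℤ} {P Q : Polynomial (Polynomial ℂ)}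
    (hP : IsWt m w P) (hQ : IsWt m v Q) : IsWt m (w + v) (P * Q) := by
  intro i j h
  rw [Polynomial.coeff_mul, Polynomial.finset_sum_coeff] at h
  obtain ⟨x, hx, hx0⟩ := Finset.exists_ne_zero_of_sum_ne_zero h
  rw [Polynomial.coeff_mul] at hx0
  obtain ⟨y, hy, hy0⟩ := Finset.exists_ne_zero_of_sum_ne_zero hx0
  have h1 := hP x.1 y.1 (left_ne_zero_of_mul hy0)
  have h2 := hQ x.2 y.2 (right_ne_zero_of_mul hy0)
  rw [Finset.HasAntidiagonal.mem_antidiagonal] at hx hy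
  rw [← hx, ← hy, ← h1, ← h2]
  push_cast; ring

lemma isWt_sum {m : ℕ} {w : ℤ} {ι : Type*} {s : Finset ι}
    {f : ι → Polynomial (Polynomial ℂ)} (h : ∀ t ∈ s, IsWt m w (f t)) :
    IsWt m w (∑ t ∈ s, f t) := by
  intro i j hne
  rw [Polynomial.finset_sum_coeff, Polynomial.finset_sum_coeff] at hne
  obtain ⟨t, ht, ht0⟩ := Finset.exists_ne_zero_of_sum_ne_zero hne
  exact h t ht i j ht0

lemma isWt_prod {m : ℕ} {ι : Type*} {s : Finset ι} {w : ι → ℤ}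
    {f : ι → Polynomial (Polynomial ℂ)} (h : ∀ t ∈ s, IsWt m (w t) (f t)) :
    IsWt m (∑ t ∈ s, w t) (∏ t ∈ s, f t) := by
  classical
  induction s using Finset.cons_induction with
  | empty =>
      simp only [Finset.sum_empty, Finset.prod_empty]
      have : (1 : Polynomial (Polynomial ℂ)) = Polynomial.C (Polynomial.C 1) := by simp
      rw [this]; exact isWt_C m 1
  | cons a s ha ih =>
      rw [Finset.sum_cons, Finset.prod_cons]
      exact isWt_mul (h a (Finset.mem_cons_self a s))
        (ih fun t ht => h t (Finset.mem_cons_of_mem ht))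

lemma isWt_intCast (m : ℕ) (n : ℤ) : IsWt m 0 ((n : ℤ) : Polynomial (Polynomial ℂ)) := by
  have : ((n : ℤ) : Polynomial (Polynomial ℂ)) = Polynomial.C (Polynomial.C (n : ℂ)) := by
    push_cast; rfl
  rw [this]; exact isWt_C m _

lemma isWt_Sbiv (m : ℕ) (hm : 0 < m) (idx : ℤ) : IsWt m idx (SbivPoly m idx) := by
  intro i j h
  unfold SbivPoly at h
  split_ifs at h with hidx
  · rw [Polynomial.finset_sum_coeff, Polynomial.finset_sum_coeff] at h
    obtain ⟨t, ht, ht0⟩ := Finset.exists_ne_zero_of_sum_ne_zero h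
    rw [Finset.mem_range] at ht
    have htm : t * m ≤ idx.toNat :=
      (Nat.le_div_iff_mul_le hm).mp (Nat.lt_succ_iff.mp ht)
    rw [Polynomial.C_mul_X_pow_eq_monomial, Polynomial.coeff_monomial] at ht0
    split_ifs at ht0 with hti
    · subst hti
      rw [Polynomial.C_mul_X_pow_eq_monomial, Polynomial.coeff_monomial] at ht0
      split_ifs at ht0 with hjn
      · have hsum : t * m + j = idx.toNat := by omega
        have hc : ((t : ℤ) * m + j : ℤ) = ((t * m + j : ℕ) : ℤ) := by push_cast; ring
        rw [hc, hsum, Int.toNat_of_nonneg hidx]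
      · exact absurd rfl ht0
    · exact absurd rfl ht0
  · simp at h

lemma gamma_eq (k l N : ℕ) (hk : 1 ≤ k) (hN : 1 ≤ N) :
    ((N * ((k - 1) * (N - 1) + 2 * l) / 2 : ℕ) : ℤ)
      = k * (∑ i ∈ Finset.range N, (i : ℤ)) + N * l - ∑ i ∈ Finset.range N, (i : ℤ) := by
  set T : ℕ := ∑ i ∈ Finset.range N, i with hT
  have hT2 : T * 2 = N * (N - 1) := Finset.sum_range_id_mul_two N
  have hexp : N * ((k - 1) * (N - 1) + 2 * l) = ((k - 1) * T + N * l) * 2 := by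
    calc N * ((k - 1) * (N - 1) + 2 * l)
        = (k - 1) * (N * (N - 1)) + (N * l) * 2 := by ring
      _ = (k - 1) * (T * 2) + (N * l) * 2 := by rw [hT2]
      _ = ((k - 1) * T + N * l) * 2 := by ring
  have hdiv : N * ((k - 1) * (N - 1) + 2 * l) / 2 = (k - 1) * T + N * l := by
    rw [hexp, Nat.mul_div_cancel _ (by norm_num)]
  have hcast : (∑ i ∈ Finset.range N, (i : ℤ)) = (T : ℤ) := by
    rw [hT]; push_cast; rfl
  rw [hdiv, hcast]
  have : ((k - 1 : ℕ) : ℤ) = (k : ℤ) - 1 := by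
    rw [Nat.cast_sub hk]; norm_num
  push_cast [this]; ring

lemma isWt_WbarPoly (m k l N : ℕ) (hm : 0 < m) (hk : 1 ≤ k) (hN : 1 ≤ N) :
    IsWt m ((N * ((k - 1) * (N - 1) + 2 * l) / 2 : ℕ) : ℤ) (WbarPoly m k l N) := by
  unfold WbarPoly
  have h0 : IsWt m 0 (Polynomial.C (Polynomial.C (cConst k l N))) := isWt_C m _
  have hdet : IsWt m ((N * ((k - 1) * (N - 1) + 2 * l) / 2 : ℕ) : ℤ)
      (Matrix.det (Matrix.of fun i j : Fin N =>
        SbivPoly m (((k * (j : ℕ) + l : ℕ) : ℤ) - ((i : ℕ) : ℤ)))) := by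
    rw [Matrix.det_apply']
    apply isWt_sum
    intro σ _
    have hprod : IsWt m (∑ i : Fin N, (((k * (i : ℕ) + l : ℕ) : ℤ) - ((σ i : ℕ) : ℤ)))
        (∏ i : Fin N, (Matrix.of fun i j : Fin N =>
          SbivPoly m (((k * (j : ℕ) + l : ℕ) : ℤ) - ((i : ℕ) : ℤ))) (σ i) i) := by
      apply isWt_prod
      intro t _
      simpa [Matrix.of_apply] using
        isWt_Sbiv m hm (((k * (t : ℕ) + l : ℕ) : ℤ) - ((σ t : ℕ) : ℤ))
    have hmul := isWt_mul (isWt_intCast m (Equiv.Perm.sign σ : ℤ)) hprod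
    have hweq : (0 : ℤ) + ∑ i : Fin N, (((k * (i : ℕ) + l : ℕ) : ℤ) - ((σ i : ℕ) : ℤ))
        = ((N * ((k - 1) * (N - 1) + 2 * l) / 2 : ℕ) : ℤ) := by
      rw [zero_add, Finset.sum_sub_distrib, Equiv.sum_comp σ (fun i : Fin N => ((i : ℕ) : ℤ))]
      rw [gamma_eq k l N hk hN]
      rw [Fin.sum_univ_eq_sum_range (fun i => ((k * i + l : ℕ) : ℤ)) N,
        Fin.sum_univ_eq_sum_range (fun i => ((i : ℕ) : ℤ)) N]
      push_cast
      rw [Finset.sum_add_distrib, Finset.sum_const, ← Finset.mul_sum]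
      simp [mul_comm]
    have hfinal := isWt_congr hmul hweq
    have hcast : ((Equiv.Perm.sign σ : ℤ) : Polynomial (Polynomial ℂ))
        * ∏ i : Fin N, (Matrix.of fun i j : Fin N =>
            SbivPoly m (((k * (j : ℕ) + l : ℕ) : ℤ) - ((i : ℕ) : ℤ))) (σ i) i
        = ↑↑(Equiv.Perm.sign σ)
        * ∏ i : Fin N, (Matrix.of fun i j : Fin N =>
            SbivPoly m (((k * (j : ℕ) + l : ℕ) : ℤ) - ((i : ℕ) : ℤ))) (σ i) i := by
      norm_cast
    rw [hcast] at hfinal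
    exact hfinal
  exact isWt_congr (isWt_mul h0 hdet) (by rw [zero_add])

lemma eval_SbivPoly (m : ℕ) (idx : ℤ) (z a : ℂ) :
    Polynomial.eval₂ (Polynomial.evalRingHom z) a (SbivPoly m idx) = SfunInt m idx z a := by
  unfold SbivPoly SfunInt Sfun
  split_ifs with h
  · rw [Polynomial.eval₂_finset_sum]
    apply Finset.sum_congr rfl
    intro t _
    rw [Polynomial.eval₂_mul, Polynomial.eval₂_C, Polynomial.eval₂_X_pow]
    simp only [Polynomial.coe_evalRingHom, Polynomial.eval_mul, Polynomial.eval_C,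
      Polynomial.eval_pow, Polynomial.eval_X]
    push_cast
    rw [mul_inv]
    ring
  · simp

lemma eval_WbarPoly (m k l N : ℕ) (z a : ℂ) :
    Polynomial.eval₂ (Polynomial.evalRingHom z) a (WbarPoly m k l N) = WbarFun m k l N z a := by
  unfold WbarPoly WbarFun
  rw [← Polynomial.coe_eval₂RingHom, map_mul]
  congr 1
  · rw [Polynomial.coe_eval₂RingHom, Polynomial.eval₂_C]
    simp
  · rw [RingHom.map_det]
    congr 1
    ext i j
    simp only [RingHom.mapMatrix_apply, Matrix.map_apply, Matrix.of_apply,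
      Polynomial.coe_eval₂RingHom]
    exact eval_SbivPoly m _ z a

/-- For positive integers `m, k, l, N` with `m > 1`, `1 ≤ l < k`, and `c ≠ 0`:
`W̄_N^{[m,k,l]}(z; c^m) = c^Γ · W_N^{[m,k,l]}(z/c)` where `Γ = N((k-1)(N-1)+2l)/2`;
in particular every monomial `a^i z^j` occurring in `W̄_N^{[m,k,l]}(z;a)` satisfies
`im + j = Γ`. -/
theorem Wbar_scaling_and_weight
    (m k l N : ℕ) (hm : 1 < m) (hl : 1 ≤ l) (hlk : l < k) (hN : 0 < N)
    (c : ℂ) (hc : c ≠ 0) :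
    (∀ z : ℂ, WbarFun m k l N z (c ^ m) =
        c ^ (N * ((k - 1) * (N - 1) + 2 * l) / 2) * WFun m k l N (z / c)) ∧
      (∀ i j : ℕ, ((WbarPoly m k l N).coeff i).coeff j ≠ 0 →
        i * m + j = N * ((k - 1) * (N - 1) + 2 * l) / 2) := by
  have hm0 : 0 < m := lt_trans one_pos hm
  have hk : 1 ≤ k := le_of_lt (lt_of_le_of_lt hl hlk)
  have key : ∀ i j : ℕ, ((WbarPoly m k l N).coeff i).coeff j ≠ 0 →
      i * m + j = N * ((k - 1) * (N - 1) + 2 * l) / 2 := by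
    intro i j h
    have := isWt_WbarPoly m k l N hm0 hk hN i j h
    exact_mod_cast this
  refine ⟨?_, key⟩
  intro z
  set Γ : ℕ := N * ((k - 1) * (N - 1) + 2 * l) / 2 with hΓ
  set P : Polynomial (Polynomial ℂ) := WbarPoly m k l N with hP
  have h1 : WbarFun m k l N z (c ^ m)
      = Polynomial.eval₂ (Polynomial.evalRingHom z) (c ^ m) P :=
    (eval_WbarPoly m k l N z (c ^ m)).symm
  have h2 : WFun m k l N (z / c)
      = Polynomial.eval₂ (Polynomial.evalRingHom (z / c)) 1 P := by
    unfold WFun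
    exact (eval_WbarPoly m k l N (z / c) 1).symm
  rw [h1, h2, Polynomial.eval₂_eq_sum, Polynomial.eval₂_eq_sum,
    Polynomial.sum_def, Polynomial.sum_def, Finset.mul_sum]
  apply Finset.sum_congr rfl
  intro i _
  simp only [Polynomial.coe_evalRingHom, one_pow, mul_one]
  rw [Polynomial.eval_eq_sum, Polynomial.eval_eq_sum, Polynomial.sum_def, Polynomial.sum_def,
    Finset.sum_mul, Finset.mul_sum]
  apply Finset.sum_congr rfl
  intro j hj
  have hcoeff : (P.coeff i).coeff j ≠ 0 := Polynomial.mem_support_iff.mp hj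
  have hw : i * m + j = Γ := key i j hcoeff
  rw [← hw, pow_add, pow_mul, div_pow]
  have hcj : (c : ℂ) ^ j ≠ 0 := pow_ne_zero j hc
  field_simp
  ring
end

section
/- (Proposition 1) Let n ≥ 1, let ξ_0 ∈ ℂ with ξ_0 ≠ 0, let a_1,…,a_n be nonzero real numbers, let b_1,…,b_n be real numbers, and let χ_0 ∈ ℂ. Then the polynomial identity D(χ) = (χ − χ_0)^{n+1} holds in ℂ[χ] if and only if the b_j are pairwise distinct, χ_0 = (2ξ_0 − ∑_{j=1}^n b_j)/(n+1), and for every j, a_j² = (b_j + χ_0)^{n+1} / ( ξ_0 · ∏_{i≠j} (b_j − b_i) ). -/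
open scoped BigOperators

open Polynomial in
/-- The spectral characteristic polynomial
`D(χ) = (χ - 2ξ₀)·∏_{j=1}^n (χ + b_j) + ξ₀ · ∑_{i=1}^n a_i² · ∏_{j≠i} (χ + b_j)`. -/
noncomputable def Dpoly (n : ℕ) (ξ₀ : ℂ) (a b : Fin n → ℝ) : Polynomial ℂ :=
  (X - C (2 * ξ₀)) * ∏ j, (X + C (b j : ℂ)) +
    C ξ₀ * ∑ i, C ((a i : ℂ) ^ 2) * ∏ j ∈ Finset.univ.erase i, (X + C (b j : ℂ))

open Polynomial Finset in
lemma eval_Dpoly (n : ℕ) (ξ₀ : ℂ) (a b : Fin n → ℝ) (m : Fin n) :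
    (Dpoly n ξ₀ a b).eval (-(b m : ℂ)) =
      ξ₀ * (a m : ℂ) ^ 2 * ∏ j ∈ univ.erase m, ((b j : ℂ) - (b m : ℂ)) := by
  have h0 : ((∏ j, (X + C (b j : ℂ))).eval (-(b m : ℂ))) = 0 := by
    rw [eval_prod]
    exact Finset.prod_eq_zero (mem_univ m) (by simp)
  rw [Dpoly, eval_add, eval_mul, h0, mul_zero, zero_add, eval_mul, eval_C, eval_finset_sum]
  rw [Finset.sum_eq_single m]
  · simp only [eval_mul, eval_C, eval_prod, eval_add, eval_X]
    rw [mul_assoc]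
    congr 1
    congr 1
    exact Finset.prod_congr rfl (fun i _ => by ring)
  · intro i _ him
    rw [eval_mul, eval_prod]
    rw [Finset.prod_eq_zero (Finset.mem_erase.mpr ⟨Ne.symm him, mem_univ m⟩) (by simp)]
    ring
  · simp

open Polynomial Finset in
lemma natDegree_Q_le (n : ℕ) (ξ₀ : ℂ) (a b : Fin n → ℝ) :
    (Polynomial.C ξ₀ * ∑ i, Polynomial.C ((a i : ℂ) ^ 2) *
      ∏ j ∈ Finset.univ.erase i, (X + C (b j : ℂ))).natDegree ≤ n - 1 := by
  refine (natDegree_C_mul_le _ _).trans (natDegree_sum_le_of_forall_le _ _ fun i _ => ?_)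
  refine (natDegree_C_mul_le _ _).trans ?_
  rw [natDegree_prod_of_monic _ _ (fun j _ => monic_X_add_C _)]
  simp [Finset.card_erase_of_mem]

open Polynomial Finset in
lemma coeff_Dpoly (n : ℕ) (hn : 1 ≤ n) (ξ₀ : ℂ) (a b : Fin n → ℝ) :
    (Dpoly n ξ₀ a b).coeff n = (∑ j, (b j : ℂ)) - 2 * ξ₀ := by
  have hPm : (∏ j, (X + C (b j : ℂ))).Monic :=
    monic_prod_of_monic _ _ fun i _ => monic_X_add_C _
  have hPd : (∏ j, (X + C (b j : ℂ))).natDegree = n := by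
    rw [natDegree_prod_of_monic _ _ (fun j _ => monic_X_add_C _)]
    simp
  have hm : ((X - C (2 * ξ₀)) * ∏ j, (X + C (b j : ℂ))).Monic := (monic_X_sub_C _).mul hPm
  have hd : ((X - C (2 * ξ₀)) * ∏ j, (X + C (b j : ℂ))).natDegree = n + 1 := by
    rw [natDegree_mul (monic_X_sub_C _).ne_zero hPm.ne_zero, natDegree_X_sub_C, hPd, add_comm]
  have h1 : ((X - C (2 * ξ₀)) * ∏ j, (X + C (b j : ℂ))).coeff n = (∑ j, (b j : ℂ)) - 2 * ξ₀ := by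
    have := nextCoeff_of_natDegree_pos (p := (X - C (2 * ξ₀)) * ∏ j, (X + C (b j : ℂ)))
      (by rw [hd]; omega)
    rw [hd] at this
    simp only [Nat.add_sub_cancel] at this
    rw [← this, Monic.nextCoeff_mul (monic_X_sub_C _) hPm, nextCoeff_X_sub_C,
      Monic.nextCoeff_prod _ _ (fun i _ => monic_X_add_C _)]
    simp [nextCoeff_X_add_C]
    ring
  have h2 : (Polynomial.C ξ₀ * ∑ i, Polynomial.C ((a i : ℂ) ^ 2) *
      ∏ j ∈ Finset.univ.erase i, (X + C (b j : ℂ))).coeff n = 0 :=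
    coeff_eq_zero_of_natDegree_lt (lt_of_le_of_lt (natDegree_Q_le n ξ₀ a b) (by omega))
  rw [Dpoly, coeff_add, h1, h2, add_zero]

open Polynomial Finset in
lemma natDegree_Dpoly_le (n : ℕ) (ξ₀ : ℂ) (a b : Fin n → ℝ) :
    (Dpoly n ξ₀ a b).natDegree ≤ n + 1 := by
  have hPm : (∏ j, (X + C (b j : ℂ))).Monic :=
    monic_prod_of_monic _ _ fun i _ => monic_X_add_C _
  have hPd : (∏ j, (X + C (b j : ℂ))).natDegree = n := by
    rw [natDegree_prod_of_monic _ _ (fun j _ => monic_X_add_C _)]; simp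
  refine natDegree_add_le_of_degree_le ?_ ((natDegree_Q_le n ξ₀ a b).trans (by omega))
  exact (natDegree_mul_le).trans (by rw [natDegree_X_sub_C, hPd, add_comm])

open Polynomial in
lemma coeff_pow_n (n : ℕ) (χ₀ : ℂ) :
    ((X - C χ₀) ^ (n + 1)).coeff n = -((n + 1 : ℕ) * χ₀) := by
  have hd : ((X - C χ₀) ^ (n + 1)).natDegree = n + 1 := by
    rw [natDegree_pow, natDegree_X_sub_C, mul_one]
  have := nextCoeff_of_natDegree_pos (p := (X - C χ₀) ^ (n + 1)) (by omega)
  rw [hd] at this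
  simp only [Nat.add_sub_cancel] at this
  rw [← this, Monic.nextCoeff_pow (monic_X_sub_C _), nextCoeff_X_sub_C]
  simp [nsmul_eq_mul]

open Polynomial Finset in
lemma inj_of_Dpoly_eq_pow (n : ℕ) (hn : 1 ≤ n) (ξ₀ : ℂ) (hξ₀ : ξ₀ ≠ 0)
    (a b : Fin n → ℝ) (ha : ∀ j, a j ≠ 0) (χ₀ : ℂ)
    (hD : Dpoly n ξ₀ a b = (X - C χ₀) ^ (n + 1)) : Function.Injective b := by
  classical
  intro j k hbjk
  by_contra hjk
  -- Step 1: χ₀ = -(b j)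
  have hev := eval_Dpoly n ξ₀ a b j
  rw [hD] at hev
  simp only [eval_pow, eval_sub, eval_X, eval_C] at hev
  rw [Finset.prod_eq_zero (Finset.mem_erase.mpr ⟨Ne.symm hjk, mem_univ k⟩)
      (by rw [hbjk]; ring), mul_zero] at hev
  have hχ : χ₀ = -(b j : ℂ) := by
    have h := pow_eq_zero_iff (n := n + 1) (by omega) |>.mp hev
    linear_combination -h
  -- Setup
  set T : Finset (Fin n) := univ.filter (fun i => b i = b j) with hT
  have hjT : j ∈ T := by simp [hT]
  have hkT : k ∈ T := by simp [hT, hbjk]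
  set m := T.card with hmdef
  have hm2 : 2 ≤ m := by
    have hsub : ({j, k} : Finset (Fin n)) ⊆ T := by
      intro x hx
      rcases Finset.mem_insert.mp hx with rfl | hx
      · exact hjT
      · rw [Finset.mem_singleton.mp hx]; exact hkT
    calc 2 = ({j, k} : Finset (Fin n)).card := (Finset.card_pair hjk).symm
    _ ≤ T.card := Finset.card_le_card hsub
  have hmn : m ≤ n := by
    have := Finset.card_filter_le (univ : Finset (Fin n)) (fun i => b i = b j)
    simpa using this
  set U : Polynomial ℂ := ∏ i ∈ univ.filter (fun i => ¬ b i = b j), (X + C (b i : ℂ)) with hU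
  set V : Fin n → Polynomial ℂ :=
    fun i => ∏ l ∈ (univ.filter (fun i => ¬ b i = b j)).erase i, (X + C (b l : ℂ)) with hV
  have hconst : ∀ s : Finset (Fin n), s ⊆ T →
      ∏ i ∈ s, (X + C (b i : ℂ)) = (X + C ((b j : ℝ) : ℂ)) ^ s.card := by
    intro s hs
    rw [Finset.prod_congr rfl (fun i hi => by
      rw [(Finset.mem_filter.mp (hs hi)).2]), Finset.prod_const]
  -- split products
  have hP : ∏ i, (X + C (b i : ℂ)) = (X + C ((b j : ℝ) : ℂ)) ^ m * U := by
    rw [← Finset.prod_filter_mul_prod_filter_not univ (fun i => b i = b j)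
      (fun i => (X + C (b i : ℂ))), ← hT, hconst T (Finset.Subset.refl T)]
  have herase_mem : ∀ i ∈ T, ∏ l ∈ univ.erase i, (X + C (b l : ℂ)) =
      (X + C ((b j : ℝ) : ℂ)) ^ (m - 1) * U := by
    intro i hi
    rw [← Finset.prod_filter_mul_prod_filter_not (univ.erase i) (fun i => b i = b j)
      (fun i => (X + C (b i : ℂ))), Finset.filter_erase, Finset.filter_erase, ← hT,
      hconst (T.erase i) (Finset.erase_subset _ _), Finset.card_erase_of_mem hi,
      Finset.erase_eq_of_notMem (by
        simp only [Finset.mem_filter, not_and, not_not]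
        intro _
        exact (Finset.mem_filter.mp hi).2)]
  have herase_not : ∀ i ∉ T, ∏ l ∈ univ.erase i, (X + C (b l : ℂ)) =
      (X + C ((b j : ℝ) : ℂ)) ^ m * V i := by
    intro i hi
    rw [← Finset.prod_filter_mul_prod_filter_not (univ.erase i) (fun i => b i = b j)
      (fun i => (X + C (b i : ℂ))), Finset.filter_erase, Finset.filter_erase, ← hT,
      Finset.erase_eq_of_notMem hi, hconst T (Finset.Subset.refl T)]
  -- rewrite the sum
  set W : Polynomial ℂ := ∑ i ∈ univ.filter (fun i => ¬ b i = b j),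
    C ((a i : ℂ) ^ 2) * V i with hW
  have hQ : ∑ i, C ((a i : ℂ) ^ 2) * ∏ l ∈ univ.erase i, (X + C (b l : ℂ)) =
      (X + C ((b j : ℝ) : ℂ)) ^ (m - 1) *
        (C (∑ i ∈ T, (a i : ℂ) ^ 2) * U + (X + C ((b j : ℝ) : ℂ)) * W) := by
    rw [← Finset.sum_filter_add_sum_filter_not univ (fun i => b i = b j), ← hT]
    have e1 : ∑ i ∈ T, C ((a i : ℂ) ^ 2) * ∏ l ∈ univ.erase i, (X + C (b l : ℂ)) =
        C (∑ i ∈ T, (a i : ℂ) ^ 2) * ((X + C ((b j : ℝ) : ℂ)) ^ (m - 1) * U) := by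
      rw [Finset.sum_congr rfl (fun i hi => by rw [herase_mem i hi]), ← Finset.sum_mul, map_sum]
    have e2 : ∑ i ∈ univ.filter (fun i => ¬ b i = b j),
        C ((a i : ℂ) ^ 2) * ∏ l ∈ univ.erase i, (X + C (b l : ℂ)) =
        (X + C ((b j : ℝ) : ℂ)) ^ m * W := by
      rw [Finset.sum_congr rfl (fun i hi => by
        rw [herase_not i (by simp only [hT, Finset.mem_filter] at hi ⊢; tauto)]),
        hW, Finset.mul_sum]
      exact Finset.sum_congr rfl (fun i hi => by ring)
    obtain ⟨M, hM⟩ : ∃ M, m = M + 1 := ⟨m - 1, by omega⟩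
    rw [e1, e2, hM, Nat.add_sub_cancel, pow_succ]
    ring
  -- factor Dpoly
  have hDfact : Dpoly n ξ₀ a b = (X + C ((b j : ℝ) : ℂ)) ^ (m - 1) *
      ((X - C (2 * ξ₀)) * ((X + C ((b j : ℝ) : ℂ)) * U) +
        C ξ₀ * (C (∑ i ∈ T, (a i : ℂ) ^ 2) * U + (X + C ((b j : ℝ) : ℂ)) * W)) := by
    obtain ⟨M, hM⟩ : ∃ M, m = M + 1 := ⟨m - 1, by omega⟩
    rw [Dpoly, hP, hQ, hM, Nat.add_sub_cancel, pow_succ]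
    ring
  have hpowsplit : ((X : Polynomial ℂ) - C χ₀) ^ (n + 1) =
      (X + C ((b j : ℝ) : ℂ)) ^ (m - 1) * (X + C ((b j : ℝ) : ℂ)) ^ (n + 2 - m) := by
    rw [hχ, show (X : Polynomial ℂ) - C (-((b j : ℝ) : ℂ)) = X + C ((b j : ℝ) : ℂ) by
      rw [map_neg, sub_neg_eq_add], ← pow_add]
    congr 1
    omega
  have hcancel : (X - C (2 * ξ₀)) * ((X + C ((b j : ℝ) : ℂ)) * U) +
      C ξ₀ * (C (∑ i ∈ T, (a i : ℂ) ^ 2) * U + (X + C ((b j : ℝ) : ℂ)) * W) =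
      (X + C ((b j : ℝ) : ℂ)) ^ (n + 2 - m) := by
    apply mul_left_cancel₀ (pow_ne_zero (m - 1) (X_add_C_ne_zero ((b j : ℝ) : ℂ)))
    rw [← hDfact, hD, hpowsplit]
  have heval := congrArg (Polynomial.eval (-((b j : ℝ) : ℂ))) hcancel
  simp only [eval_add, eval_mul, eval_pow, eval_sub, eval_X, eval_C, neg_add_cancel,
    zero_mul, mul_zero, add_zero, zero_add] at heval
  rw [zero_pow (by omega : n + 2 - m ≠ 0)] at heval
  -- heval : ξ₀ * (∑ * U.eval) = 0
  have hU0 : U.eval (-((b j : ℝ) : ℂ)) ≠ 0 := by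
    rw [hU, eval_prod]
    apply Finset.prod_ne_zero_iff.mpr
    intro i hi
    simp only [Finset.mem_filter] at hi
    simp only [eval_add, eval_X, eval_C]
    intro h
    exact hi.2 (by exact_mod_cast (show (b i : ℂ) = (b j : ℂ) by linear_combination h))
  have hS0 : (∑ i ∈ T, (a i : ℂ) ^ 2) ≠ 0 := by
    have hcast : (∑ i ∈ T, (a i : ℂ) ^ 2) = ((∑ i ∈ T, (a i) ^ 2 : ℝ) : ℂ) := by
      push_cast; ring
    rw [hcast, Complex.ofReal_ne_zero]
    have hpos : (0 : ℝ) < ∑ i ∈ T, (a i) ^ 2 :=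
      Finset.sum_pos (fun i _ => lt_of_le_of_ne (sq_nonneg _) (Ne.symm (pow_ne_zero 2 (ha i)))) ⟨j, hjT⟩
    exact ne_of_gt hpos
  apply hξ₀
  rcases mul_eq_zero.mp heval with h | h
  · exact h
  · rcases mul_eq_zero.mp h with h' | h'
    · exact absurd h' hS0
    · exact absurd h' hU0

open Polynomial Finset in
theorem key_eq (n : ℕ) (hn : 1 ≤ n) (ξ₀ : ℂ) (hξ₀ : ξ₀ ≠ 0) (b : Fin n → ℝ)
    (hb : Function.Injective b) (χ₀ A : ℂ) (j : Fin n) :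
    (A = ((b j : ℂ) + χ₀) ^ (n + 1) /
        (ξ₀ * ∏ i ∈ univ.erase j, ((b j : ℂ) - (b i : ℂ)))) ↔
    ξ₀ * A * ∏ i ∈ univ.erase j, ((b i : ℂ) - (b j : ℂ)) = (-(b j : ℂ) - χ₀) ^ (n + 1) := by
  have hprod : (∏ i ∈ univ.erase j, ((b j : ℂ) - (b i : ℂ))) ≠ 0 := by
    apply Finset.prod_ne_zero_iff.mpr
    intro i hi
    have : b j ≠ b i := fun h => (Finset.mem_erase.mp hi).1 (hb h.symm)
    exact sub_ne_zero.mpr (by exact_mod_cast this)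
  have hsign : ∏ i ∈ univ.erase j, ((b i : ℂ) - (b j : ℂ)) =
      (-1 : ℂ) ^ (n - 1) * ∏ i ∈ univ.erase j, ((b j : ℂ) - (b i : ℂ)) := by
    rw [Finset.prod_congr rfl (fun i _ => show (b i : ℂ) - (b j : ℂ) =
      (-1) * ((b j : ℂ) - (b i : ℂ)) by ring), Finset.prod_mul_distrib, Finset.prod_const,
      Finset.card_erase_of_mem (mem_univ j)]
    simp
  have hpow : (-(b j : ℂ) - χ₀) ^ (n + 1) = (-1 : ℂ) ^ (n - 1) * ((b j : ℂ) + χ₀) ^ (n + 1) := by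
    rw [show -(b j : ℂ) - χ₀ = (-1) * ((b j : ℂ) + χ₀) by ring, mul_pow,
      show n + 1 = (n - 1) + 2 by omega, pow_add, neg_one_sq, mul_one]
  rw [hsign, hpow, eq_div_iff (mul_ne_zero hξ₀ hprod)]
  constructor <;> intro h
  · linear_combination ((-1 : ℂ) ^ (n - 1)) * h
  · have h2 : (-1 : ℂ) ^ (n - 1) * (A * (ξ₀ * ∏ i ∈ univ.erase j, ((b j : ℂ) - (b i : ℂ)))) =
        (-1 : ℂ) ^ (n - 1) * ((b j : ℂ) + χ₀) ^ (n + 1) := by linear_combination h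
    exact mul_left_cancel₀ (pow_ne_zero _ (by norm_num : (-1 : ℂ) ≠ 0)) h2


open Polynomial Finset in
lemma coeff_Dpoly_top (n : ℕ) (hn : 1 ≤ n) (ξ₀ : ℂ) (a b : Fin n → ℝ) :
    (Dpoly n ξ₀ a b).coeff (n + 1) = 1 := by
  have hPm : (∏ j, (X + C (b j : ℂ))).Monic :=
    monic_prod_of_monic _ _ fun i _ => monic_X_add_C _
  have hPd : (∏ j, (X + C (b j : ℂ))).natDegree = n := by
    rw [natDegree_prod_of_monic _ _ (fun j _ => monic_X_add_C _)]; simp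
  have hm : ((X - C (2 * ξ₀)) * ∏ j, (X + C (b j : ℂ))).Monic := (monic_X_sub_C _).mul hPm
  have hd : ((X - C (2 * ξ₀)) * ∏ j, (X + C (b j : ℂ))).natDegree = n + 1 := by
    rw [natDegree_mul (monic_X_sub_C _).ne_zero hPm.ne_zero, natDegree_X_sub_C, hPd, add_comm]
  have h2 : (Polynomial.C ξ₀ * ∑ i, Polynomial.C ((a i : ℂ) ^ 2) *
      ∏ j ∈ Finset.univ.erase i, (X + C (b j : ℂ))).coeff (n + 1) = 0 :=
    coeff_eq_zero_of_natDegree_lt (lt_of_le_of_lt (natDegree_Q_le n ξ₀ a b) (by omega))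
  rw [Dpoly, coeff_add, h2, add_zero, ← hd]
  exact hm.coeff_natDegree

open Polynomial Finset in
/-- Proposition 1: `D(χ) = (χ - χ₀)^{n+1}` iff the `b_j` are pairwise distinct,
`χ₀ = (2ξ₀ - ∑ b_j)/(n+1)`, and `a_j² = (b_j + χ₀)^{n+1}/(ξ₀ ∏_{i≠j}(b_j - b_i))` for all `j`. -/
theorem Dpoly_eq_pow_iff (n : ℕ) (hn : 1 ≤ n) (ξ₀ : ℂ) (hξ₀ : ξ₀ ≠ 0)
    (a b : Fin n → ℝ) (ha : ∀ j, a j ≠ 0) (χ₀ : ℂ) :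
    Dpoly n ξ₀ a b = (X - C χ₀) ^ (n + 1) ↔
      Function.Injective b ∧
        χ₀ = (2 * ξ₀ - ∑ j, (b j : ℂ)) / (n + 1) ∧
        ∀ j, (a j : ℂ) ^ 2 =
          ((b j : ℂ) + χ₀) ^ (n + 1) /
            (ξ₀ * ∏ i ∈ Finset.univ.erase j, ((b j : ℂ) - (b i : ℂ))) := by
  have hn1 : ((n : ℂ) + 1) ≠ 0 := Nat.cast_add_one_ne_zero n
  constructor
  · intro hD
    have hinj : Function.Injective b := inj_of_Dpoly_eq_pow n hn ξ₀ hξ₀ a b ha χ₀ hD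
    have hcoeff := congrArg (fun p => Polynomial.coeff p n) hD
    rw [coeff_Dpoly n hn ξ₀ a b, coeff_pow_n n χ₀] at hcoeff
    push_cast at hcoeff
    have hχ : χ₀ = (2 * ξ₀ - ∑ j, (b j : ℂ)) / ((n : ℂ) + 1) := by
      rw [eq_div_iff hn1]
      linear_combination hcoeff
    refine ⟨hinj, hχ, fun j => ?_⟩
    rw [key_eq n hn ξ₀ hξ₀ b hinj χ₀ _ j]
    have hev := eval_Dpoly n ξ₀ a b j
    rw [hD] at hev
    simp only [eval_pow, eval_sub, eval_X, eval_C] at hev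
    exact hev.symm
  · rintro ⟨hinj, hχ, ha2⟩
    have hEc : ∀ k : ℕ, n ≤ k →
        (Dpoly n ξ₀ a b - (X - C χ₀) ^ (n + 1)).coeff k = 0 := by
      intro k hk
      rw [coeff_sub]
      rcases eq_or_lt_of_le hk with rfl | hk
      · rw [coeff_Dpoly n hn ξ₀ a b, coeff_pow_n n χ₀, hχ]
        push_cast
        field_simp
        ring
      rcases eq_or_lt_of_le (Nat.succ_le_of_lt hk) with hk1 | hk1
      · have hmon : (((X : Polynomial ℂ) - C χ₀) ^ (n + 1)).Monic := (monic_X_sub_C _).pow _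
        have hc1 : (((X : Polynomial ℂ) - C χ₀) ^ (n + 1)).coeff (n + 1) = 1 := by
          have := hmon.coeff_natDegree
          rwa [natDegree_pow, natDegree_X_sub_C, mul_one] at this
        rw [← hk1, coeff_Dpoly_top n hn ξ₀ a b, hc1, sub_self]
      · rw [coeff_eq_zero_of_natDegree_lt (lt_of_le_of_lt (natDegree_Dpoly_le n ξ₀ a b) hk1),
          coeff_eq_zero_of_natDegree_lt (by
            rw [natDegree_pow, natDegree_X_sub_C, mul_one]; exact hk1), sub_self]
    have hdegE : (Dpoly n ξ₀ a b - (X - C χ₀) ^ (n + 1)).natDegree < n := by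
      by_cases hE : Dpoly n ξ₀ a b - (X - C χ₀) ^ (n + 1) = 0
      · rw [hE, natDegree_zero]; omega
      · rw [natDegree_lt_iff_degree_lt hE]
        exact (degree_lt_iff_coeff_zero _ _).mpr (fun m hm => hEc m (by exact_mod_cast hm))
    have hzero : Dpoly n ξ₀ a b - (X - C χ₀) ^ (n + 1) = 0 := by
      apply eq_zero_of_natDegree_lt_card_of_eval_eq_zero _
        (f := fun j : Fin n => -((b j : ℝ) : ℂ))
        (fun x y hxy => hinj (by
          have : ((b x : ℝ) : ℂ) = ((b y : ℝ) : ℂ) := by linear_combination -hxy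
          exact_mod_cast this))
      · intro i
        rw [eval_sub, eval_Dpoly]
        simp only [eval_pow, eval_sub, eval_X, eval_C]
        rw [(key_eq n hn ξ₀ hξ₀ b hinj χ₀ _ i).mp (ha2 i), sub_self]
      · simpa using hdegE
    linear_combination hzero
end

section
/- (Proposition 3) Let n ≥ 1 and let ξ_0 ∈ ℂ with Im ξ_0 > 0 and ξ_0 ≠ 0. For j = 1,…,n set ω_j = ((j−1)π + arg ξ_0)/(n+1), and define the real numbers a_j = (2 Im(ξ_0) csc ω_j / ((n+1)|ξ_0|^{1/2})) · ∏_{i≠j} √( sin ω_i / |sin((i−j)π/(n+1))| ) and b_j = (2 Im(ξ_0)/(n+1))·( cot ω_j + ∑_{i=1}^n cot ω_i ) − 2 Re(ξ_0), and define χ_0 = 2 Re(ξ_0) + (2 Im(ξ_0)/(n+1))·( i − ∑_{i=1}^n cot ω_i ) ∈ ℂ. Then the spectral characteristic polynomial built from these data satisfies D(χ) = (χ − χ_0)^{n+1} in ℂ[χ]; that is, χ_0 is an (n+1)-multiple root of D. -/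
open scoped BigOperators Real

/-- `ω_j = ((j-1)π + arg ξ₀)/(n+1)` for `j = 1, …, n` (here indexed by `Fin n`). -/
noncomputable def omegaProp3 (n : ℕ) (ξ₀ : ℂ) (j : Fin n) : ℝ :=
  ((j : ℝ) * π + Complex.arg ξ₀) / (n + 1)

/-- `a_j = (2 Im(ξ₀) csc ω_j / ((n+1)|ξ₀|^{1/2})) · ∏_{i≠j} √(sin ω_i / |sin((i-j)π/(n+1))|)`. -/
noncomputable def aProp3 (n : ℕ) (ξ₀ : ℂ) (j : Fin n) : ℝ :=
  (2 * ξ₀.im * (Real.sin (omegaProp3 n ξ₀ j))⁻¹) / ((n + 1) * Real.sqrt ‖ξ₀‖) *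
    ∏ i ∈ Finset.univ.erase j,
      Real.sqrt (Real.sin (omegaProp3 n ξ₀ i) /
        |Real.sin (((i : ℝ) - (j : ℝ)) * π / (n + 1))|)

/-- `b_j = (2 Im(ξ₀)/(n+1))·( cot ω_j + ∑_{i=1}^n cot ω_i ) - 2 Re(ξ₀)`. -/
noncomputable def bProp3 (n : ℕ) (ξ₀ : ℂ) (j : Fin n) : ℝ :=
  (2 * ξ₀.im / (n + 1)) *
      (Real.cos (omegaProp3 n ξ₀ j) / Real.sin (omegaProp3 n ξ₀ j) +
        ∑ i, Real.cos (omegaProp3 n ξ₀ i) / Real.sin (omegaProp3 n ξ₀ i)) -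
    2 * ξ₀.re

/-- `χ₀ = 2 Re(ξ₀) + (2 Im(ξ₀)/(n+1))·( i - ∑_{i=1}^n cot ω_i )`. -/
noncomputable def chi0Prop3 (n : ℕ) (ξ₀ : ℂ) : ℂ :=
  (2 * ξ₀.re : ℝ) + ((2 * ξ₀.im / (n + 1) : ℝ) : ℂ) *
    (Complex.I - ((∑ i, Real.cos (omegaProp3 n ξ₀ i) / Real.sin (omegaProp3 n ξ₀ i) : ℝ) : ℂ))

open Polynomial Finset

section Aux

variable (n : ℕ) (ξ₀ : ℂ)

lemma arg_pos_of_im_pos (him : 0 < ξ₀.im) : 0 < Complex.arg ξ₀ := by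
  rcases lt_or_eq_of_le (Complex.arg_nonneg_iff.2 him.le) with h | h
  · exact h
  · exfalso
    have := (Complex.arg_eq_zero_iff.1 h.symm).2
    linarith

lemma arg_lt_pi_of_im_pos (him : 0 < ξ₀.im) : Complex.arg ξ₀ < π :=
  Complex.arg_lt_pi_iff.2 (Or.inr him.ne')

lemma omega_mem (him : 0 < ξ₀.im) (j : Fin n) :
    0 < omegaProp3 n ξ₀ j ∧ omegaProp3 n ξ₀ j < π := by
  have h0 := arg_pos_of_im_pos ξ₀ him
  have h1 := arg_lt_pi_of_im_pos ξ₀ him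
  have hπ := Real.pi_pos
  have hj : (j : ℝ) ≤ (n : ℝ) - 1 := by
    have h : (j : ℕ) + 1 ≤ n := j.isLt
    have := (Nat.cast_le (α := ℝ)).2 h
    push_cast at this
    linarith
  have hj0 : (0:ℝ) ≤ (j : ℝ) := Nat.cast_nonneg _
  have hn1 : (0:ℝ) < (n:ℝ) + 1 := by positivity
  unfold omegaProp3
  constructor
  · apply div_pos _ hn1
    nlinarith
  · rw [div_lt_iff₀ hn1]
    nlinarith

lemma sin_omega_pos (him : 0 < ξ₀.im) (j : Fin n) : 0 < Real.sin (omegaProp3 n ξ₀ j) :=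
  Real.sin_pos_of_pos_of_lt_pi (omega_mem n ξ₀ him j).1 (omega_mem n ξ₀ him j).2

/-- sin of the difference angle is positive when `j < i`. -/
lemma sinD_pos (hn : 1 ≤ n) {i j : Fin n} (hji : j < i) :
    0 < Real.sin (((i : ℝ) - (j : ℝ)) * π / (n + 1)) := by
  have hπ := Real.pi_pos
  have h1 : (1:ℝ) ≤ (i : ℝ) - (j : ℝ) := by
    have : (j : ℕ) + 1 ≤ (i : ℕ) := hji
    have := (Nat.cast_le (α := ℝ)).2 this
    push_cast at this
    linarith
  have h2 : (i : ℝ) - (j : ℝ) ≤ (n : ℝ) - 1 := by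
    have hi := i.isLt
    have : ((i:ℕ):ℝ) ≤ (n:ℝ) - 1 := by
      have : (i : ℕ) + 1 ≤ n := hi
      have := (Nat.cast_le (α := ℝ)).2 this
      push_cast at this; linarith
    have hj0 : (0:ℝ) ≤ (j : ℝ) := Nat.cast_nonneg _
    linarith
  have hn1 : (0:ℝ) < (n:ℝ) + 1 := by positivity
  apply Real.sin_pos_of_pos_of_lt_pi
  · positivity
  · rw [div_lt_iff₀ hn1]
    nlinarith

end Aux

section Mu

variable (n : ℕ) (ξ₀ : ℂ)

/-- `μ_j = χ₀ + b_j`. -/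
noncomputable def muP (j : Fin n) : ℂ := chi0Prop3 n ξ₀ + (bProp3 n ξ₀ j : ℂ)

lemma muP_eq (j : Fin n) :
    muP n ξ₀ j = ((2 * ξ₀.im / (n + 1) : ℝ) : ℂ) *
      (((Real.cos (omegaProp3 n ξ₀ j) / Real.sin (omegaProp3 n ξ₀ j) : ℝ) : ℂ) + Complex.I) := by
  unfold muP chi0Prop3 bProp3
  push_cast
  ring

lemma muP_sum : chi0Prop3 n ξ₀ + ∑ j, muP n ξ₀ j = 2 * ξ₀ := by
  have hsum : ∑ j, muP n ξ₀ j =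
      ((2 * ξ₀.im / (n + 1) : ℝ) : ℂ) *
        (((∑ i, Real.cos (omegaProp3 n ξ₀ i) / Real.sin (omegaProp3 n ξ₀ i) : ℝ) : ℂ)
          + (n : ℂ) * Complex.I) := by
    rw [Finset.sum_congr rfl (fun j _ => muP_eq n ξ₀ j), ← Finset.mul_sum]
    congr 1
    rw [Finset.sum_add_distrib, Finset.sum_const, Finset.card_univ, Fintype.card_fin]
    push_cast
    simp [nsmul_eq_mul]
  rw [hsum]
  unfold chi0Prop3
  have hne : ((n : ℂ) + 1) ≠ 0 := by
    exact_mod_cast Nat.cast_add_one_ne_zero (R := ℂ) n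
  have hβ : ((2 * ξ₀.im / (n + 1) : ℝ) : ℂ) * ((n : ℂ) + 1) = 2 * ξ₀.im := by
    push_cast
    field_simp
  have hri := Complex.re_add_im ξ₀
  push_cast at hβ ⊢
  linear_combination Complex.I * hβ + 2 * hri

lemma muP_sub (i j : Fin n) (him : 0 < ξ₀.im) :
    muP n ξ₀ j - muP n ξ₀ i =
      ((2 * ξ₀.im / (n + 1) * Real.sin (((i : ℝ) - (j : ℝ)) * π / (n + 1)) /
        (Real.sin (omegaProp3 n ξ₀ i) * Real.sin (omegaProp3 n ξ₀ j)) : ℝ) : ℂ) := by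
  have hsi := sin_omega_pos n ξ₀ him i
  have hsj := sin_omega_pos n ξ₀ him j
  have hδ : omegaProp3 n ξ₀ i - omegaProp3 n ξ₀ j = ((i : ℝ) - (j : ℝ)) * π / (n + 1) := by
    unfold omegaProp3
    have : ((n : ℝ) + 1) ≠ 0 := by positivity
    field_simp
    ring
  have hreal : Real.cos (omegaProp3 n ξ₀ j) / Real.sin (omegaProp3 n ξ₀ j)
      - Real.cos (omegaProp3 n ξ₀ i) / Real.sin (omegaProp3 n ξ₀ i)
      = Real.sin (((i : ℝ) - (j : ℝ)) * π / (n + 1)) /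
        (Real.sin (omegaProp3 n ξ₀ i) * Real.sin (omegaProp3 n ξ₀ j)) := by
    rw [← hδ, Real.sin_sub]
    field_simp
  rw [muP_eq, muP_eq]
  push_cast
  have h2 := congrArg (fun t : ℝ => (t : ℂ)) hreal
  push_cast at h2
  linear_combination ((2 : ℂ) * ξ₀.im / (n + 1)) * h2

end Mu

section Mu2

variable (n : ℕ) (ξ₀ : ℂ)

lemma sinD_ne (hn : 1 ≤ n) {i j : Fin n} (hij : i ≠ j) :
    Real.sin (((i : ℝ) - (j : ℝ)) * π / (n + 1)) ≠ 0 := by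
  rcases lt_or_gt_of_ne hij with h | h
  · have hpos := sinD_pos n hn h
    have heq : ((i : ℝ) - (j : ℝ)) * π / (n + 1) = -(((j : ℝ) - (i : ℝ)) * π / (n + 1)) := by
      ring
    rw [heq, Real.sin_neg]
    exact neg_ne_zero.2 hpos.ne'
  · exact (sinD_pos n hn h).ne'

lemma muP_inj (hn : 1 ≤ n) (him : 0 < ξ₀.im) : Function.Injective (muP n ξ₀) := by
  intro i j h
  by_contra hne
  have hsub := muP_sub n ξ₀ i j him
  rw [← h, sub_self] at hsub
  have : (2 * ξ₀.im / (n + 1) * Real.sin (((i : ℝ) - (j : ℝ)) * π / (n + 1)) /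
      (Real.sin (omegaProp3 n ξ₀ i) * Real.sin (omegaProp3 n ξ₀ j)) : ℝ) = 0 := by
    exact_mod_cast hsub.symm
  have hβ : (0:ℝ) < 2 * ξ₀.im / (n + 1) := by positivity
  have hsi := sin_omega_pos n ξ₀ him i
  have hsj := sin_omega_pos n ξ₀ him j
  have hD := sinD_ne n hn hne
  rw [_root_.div_eq_zero_iff] at this
  rcases this with h1 | h1
  · rcases mul_eq_zero.1 h1 with h2 | h2
    · exact hβ.ne' h2
    · exact hD h2
  · nlinarith

lemma muP_pow (hn : 1 ≤ n) (him : 0 < ξ₀.im) (hξ₀ : ξ₀ ≠ 0) (j : Fin n) :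
    muP n ξ₀ j ^ (n + 1) =
      (((2 * ξ₀.im / (n + 1) / Real.sin (omegaProp3 n ξ₀ j)) ^ (n + 1) * (-1 : ℝ) ^ (j : ℕ) /
        ‖ξ₀‖ : ℝ) : ℂ) * ξ₀ := by
  have hsj := sin_omega_pos n ξ₀ him j
  have habs : ‖ξ₀‖ ≠ 0 := norm_ne_zero_iff.mpr hξ₀
  have hexp : muP n ξ₀ j = ((2 * ξ₀.im / (n + 1) / Real.sin (omegaProp3 n ξ₀ j) : ℝ) : ℂ) *
      Complex.exp ((omegaProp3 n ξ₀ j : ℝ) * Complex.I) := by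
    rw [muP_eq, Complex.exp_mul_I, ← Complex.ofReal_cos, ← Complex.ofReal_sin]
    push_cast
    have hsC : Complex.sin ((omegaProp3 n ξ₀ j : ℝ) : ℂ) ≠ 0 := by
      rw [← Complex.ofReal_sin]
      exact_mod_cast hsj.ne'
    have h1n : (1 + (n : ℂ)) ≠ 0 := by
      have := Nat.cast_add_one_ne_zero (R := ℂ) n
      intro h; apply this; linear_combination h
    field_simp [hsC, h1n]
  rw [hexp, mul_pow, ← Complex.exp_nat_mul]
  have hang : ((n + 1 : ℕ) : ℂ) * ((omegaProp3 n ξ₀ j : ℝ) * Complex.I) =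
      ((j : ℕ) : ℂ) * ((π : ℝ) * Complex.I) + (Complex.arg ξ₀ : ℝ) * Complex.I := by
    have h1 : ((n : ℝ) + 1) * omegaProp3 n ξ₀ j = (j : ℝ) * π + Complex.arg ξ₀ := by
      unfold omegaProp3
      field_simp
    have h2 := congrArg (fun t : ℝ => (t : ℂ)) h1
    push_cast at h2 ⊢
    linear_combination Complex.I * h2
  rw [hang, Complex.exp_add, Complex.exp_nat_mul, Complex.exp_pi_mul_I]
  have hargexp : Complex.exp ((Complex.arg ξ₀ : ℝ) * Complex.I) = ξ₀ / ((‖ξ₀‖ : ℝ) : ℂ) := by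
    rw [eq_div_iff (by exact_mod_cast habs), mul_comm]
    exact Complex.norm_mul_exp_arg_mul_I ξ₀
  rw [hargexp]
  have habsC : ((‖ξ₀‖ : ℝ) : ℂ) ≠ 0 := by exact_mod_cast habs
  push_cast
  field_simp

end Mu2

section Scalar

variable (n : ℕ) (ξ₀ : ℂ)

lemma scalar_key (hn : 1 ≤ n) (him : 0 < ξ₀.im) (hξ₀ : ξ₀ ≠ 0) (i : Fin n) :
    (-muP n ξ₀ i) ^ (n + 1) / ∏ j ∈ Finset.univ.erase i, (muP n ξ₀ j - muP n ξ₀ i) =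
      ξ₀ * ((aProp3 n ξ₀ i : ℝ) : ℂ) ^ 2 := by
  set β := 2 * ξ₀.im / (n + 1) with hβdef
  set s : Fin n → ℝ := fun j => Real.sin (omegaProp3 n ξ₀ j) with hsdef
  set Dd : Fin n → ℝ := fun j => Real.sin (((i : ℝ) - (j : ℝ)) * π / (n + 1)) with hDdef
  have hβpos : 0 < β := by rw [hβdef]; positivity
  have hspos : ∀ j, 0 < s j := fun j => sin_omega_pos n ξ₀ him j
  have hA : 0 < ‖ξ₀‖ := norm_pos_iff.mpr hξ₀
  set A := ‖ξ₀‖ with hAdef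
  have hDne : ∀ j ∈ Finset.univ.erase i, Dd j ≠ 0 := by
    intro j hj
    exact sinD_ne n hn (Ne.symm (Finset.mem_erase.1 hj).1)
  -- F : positive part of the product
  set F := ∏ j ∈ Finset.univ.erase i, (β * |Dd j| / (s i * s j)) with hFdef
  have hFpos : 0 < F := by
    rw [hFdef]
    apply Finset.prod_pos
    intro j hj
    have := hDne j hj
    have : 0 < |Dd j| := abs_pos.2 this
    have := hspos i; have := hspos j
    positivity
  -- the product of differences
  have hprod : ∏ j ∈ Finset.univ.erase i, (muP n ξ₀ j - muP n ξ₀ i) =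
      (((-1 : ℝ) ^ (n - 1 - (i : ℕ)) * F : ℝ) : ℂ) := by
    have h1 : ∏ j ∈ Finset.univ.erase i, (muP n ξ₀ j - muP n ξ₀ i) =
        ((∏ j ∈ Finset.univ.erase i, (β * Dd j / (s i * s j)) : ℝ) : ℂ) := by
      rw [Complex.ofReal_prod]
      exact Finset.prod_congr rfl fun j _ => muP_sub n ξ₀ i j him
    rw [h1]
    congr 1
    have h2 : ∀ j ∈ Finset.univ.erase i, β * Dd j / (s i * s j) =
        (if i < j then (-1 : ℝ) else 1) * (β * |Dd j| / (s i * s j)) := by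
      intro j hj
      have hji : j ≠ i := (Finset.mem_erase.1 hj).1
      rcases lt_or_gt_of_ne hji with h | h
      · -- j < i : Dd j > 0
        have hpos := sinD_pos n hn h
        rw [if_neg (not_lt.2 h.le), abs_of_pos hpos, one_mul]
      · -- i < j : Dd j < 0
        have hpos := sinD_pos n hn h
        have hneg : Dd j < 0 := by
          have heq : ((i : ℝ) - (j : ℝ)) * π / (n + 1) = -(((j : ℝ) - (i : ℝ)) * π / (n + 1)) := by
            ring
          rw [hDdef]; simp only []
          rw [heq, Real.sin_neg]
          linarith
        rw [if_pos h, abs_of_neg hneg]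
        ring
    rw [Finset.prod_congr rfl h2, Finset.prod_mul_distrib, ← hFdef]
    congr 1
    rw [Finset.prod_ite, Finset.prod_const, Finset.prod_const_one, mul_one]
    congr 1
    have : (Finset.univ.erase i).filter (fun j => i < j) = Finset.Ioi i := by
      ext j
      simp only [Finset.mem_filter, Finset.mem_erase, Finset.mem_univ, true_and, and_true,
        Finset.mem_Ioi]
      constructor
      · exact fun h => h.2
      · exact fun h => ⟨ne_of_gt h, h⟩
    rw [this, Fin.card_Ioi]
  -- a_i squared
  have ha2 : (aProp3 n ξ₀ i) ^ 2 = (β / s i) ^ 2 / A * ∏ j ∈ Finset.univ.erase i, (s j / |Dd j|) := by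
    unfold aProp3
    rw [mul_pow]
    have hsq : (∏ j ∈ Finset.univ.erase i,
        Real.sqrt (Real.sin (omegaProp3 n ξ₀ j) /
          |Real.sin (((j : ℝ) - (i : ℝ)) * π / (n + 1))|)) ^ 2 =
        ∏ j ∈ Finset.univ.erase i, (s j / |Dd j|) := by
      rw [← Finset.prod_pow]
      apply Finset.prod_congr rfl
      intro j hj
      have habs : |Real.sin (((j : ℝ) - (i : ℝ)) * π / (n + 1))| = |Dd j| := by
        have heq : ((j : ℝ) - (i : ℝ)) * π / (n + 1) = -(((i : ℝ) - (j : ℝ)) * π / (n + 1)) := by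
          ring
        rw [heq, Real.sin_neg, abs_neg]
      rw [habs, Real.sq_sqrt]
      have := hspos j
      have := abs_nonneg (Dd j)
      positivity
    rw [hsq]
    congr 1
    have hsi := (hspos i).ne'
    have hn1 : ((n : ℝ) + 1) ≠ 0 := by positivity
    show (2 * ξ₀.im * (s i)⁻¹ / (((n : ℝ) + 1) * Real.sqrt A)) ^ 2 = (β / s i) ^ 2 / A
    rw [hβdef, div_pow, mul_pow ((n:ℝ)+1) (Real.sqrt A) 2, Real.sq_sqrt hA.le]
    field_simp
  -- positive part identity
  have h1 : (aProp3 n ξ₀ i) ^ 2 * F = (β / s i) ^ (n + 1) / A := by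
    rw [ha2, hFdef, mul_assoc, ← Finset.prod_mul_distrib]
    have hfac : ∀ j ∈ Finset.univ.erase i,
        (s j / |Dd j|) * (β * |Dd j| / (s i * s j)) = β / s i := by
      intro j hj
      have hD := abs_ne_zero.2 (hDne j hj)
      have hsj := (hspos j).ne'
      have hsi := (hspos i).ne'
      field_simp
    rw [Finset.prod_congr rfl hfac, Finset.prod_const, Finset.card_erase_of_mem (Finset.mem_univ i),
      Finset.card_univ, Fintype.card_fin]
    rw [div_mul_eq_mul_div, ← pow_add]
    congr 2
    omega
  -- sign identities
  have hsq2 : ((-1 : ℝ) ^ (n - 1 - (i : ℕ))) ^ 2 = 1 := by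
    rw [← pow_mul, mul_comm, pow_mul]
    norm_num
  have hsign : (-1 : ℝ) ^ (n + 1) * (-1) ^ (i : ℕ) * (-1) ^ (n - 1 - (i : ℕ)) = 1 := by
    rw [← pow_add, ← pow_add]
    have hilt := i.isLt
    have : (n + 1) + (i : ℕ) + (n - 1 - (i : ℕ)) = 2 * n := by omega
    rw [this, pow_mul]
    norm_num
  have hsign2 : (-1 : ℝ) ^ (n + 1) * (-1) ^ (i : ℕ) = (-1) ^ (n - 1 - (i : ℕ)) := by
    linear_combination ((-1 : ℝ) ^ (n - 1 - (i : ℕ))) * hsign -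
      ((-1 : ℝ) ^ (n + 1) * (-1) ^ (i : ℕ)) * hsq2
  -- numerator
  have hnum : (-muP n ξ₀ i) ^ (n + 1) =
      (((-1 : ℝ) ^ (n + 1) * ((β / s i) ^ (n + 1) * (-1 : ℝ) ^ (i : ℕ) / A) : ℝ) : ℂ) * ξ₀ := by
    rw [neg_pow, muP_pow n ξ₀ hn him hξ₀ i]
    simp only [hsdef, hβdef, hAdef]
    push_cast
    ring
  -- real identity
  have hreal : (-1 : ℝ) ^ (n + 1) * ((β / s i) ^ (n + 1) * (-1 : ℝ) ^ (i : ℕ) / A) =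
      (aProp3 n ξ₀ i) ^ 2 * ((-1 : ℝ) ^ (n - 1 - (i : ℕ)) * F) := by
    linear_combination (-(-1 : ℝ) ^ (n - 1 - (i : ℕ))) * h1 +
      ((β / s i) ^ (n + 1) / A) * hsign2
  -- assemble
  rw [hnum, hprod]
  have hEne : ((-1 : ℝ) ^ (n - 1 - (i : ℕ)) * F) ≠ 0 := by
    apply mul_ne_zero _ hFpos.ne'
    positivity
  have hEC : (((-1 : ℝ) ^ (n - 1 - (i : ℕ)) * F : ℝ) : ℂ) ≠ 0 := by exact_mod_cast hEne
  rw [div_eq_iff hEC, ← Complex.ofReal_pow, mul_assoc, ← Complex.ofReal_mul, ← hreal]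
  exact mul_comm _ _

end Scalar

section Interp

lemma myP_monic {n : ℕ} (μ : Fin n → ℂ) : (∏ j, (X + C (μ j))).Monic :=
  monic_prod_of_monic _ _ fun i _ => monic_X_add_C (μ i)

lemma myP_natDegree {n : ℕ} (μ : Fin n → ℂ) : (∏ j, (X + C (μ j))).natDegree = n := by
  rw [natDegree_prod _ _ (fun i _ => (monic_X_add_C (μ i)).ne_zero)]
  simp

lemma myP_coeff_pred {n : ℕ} (hn : 1 ≤ n) (μ : Fin n → ℂ) :
    (∏ j, (X + C (μ j))).coeff (n - 1) = ∑ j, μ j := by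
  have h1 : (∏ j, (X + C (μ j))).nextCoeff = ∑ j, μ j := by
    rw [Polynomial.Monic.nextCoeff_prod _ _ (fun i _ => monic_X_add_C (μ i))]
    simp [nextCoeff_X_add_C]
  rw [← h1, nextCoeff_of_natDegree_pos, myP_natDegree]
  rw [myP_natDegree]; omega

lemma degree_Q_lt {n : ℕ} (hn : 1 ≤ n) (μ : Fin n → ℂ) :
    (X ^ (n+1) - (X - C (∑ j, μ j)) * ∏ j, (X + C (μ j))).degree < (n : WithBot ℕ) := by
  set P := ∏ j, (X + C (μ j)) with hP
  rw [degree_lt_iff_coeff_zero]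
  intro m hm
  have hPn : P.coeff n = 1 := by
    have := (myP_monic μ).coeff_natDegree
    rwa [myP_natDegree] at this
  have hcoeff : ∀ k, ((X - C (∑ j, μ j)) * P).coeff (k+1) = P.coeff k - (∑ j, μ j) * P.coeff (k+1) := by
    intro k
    rw [sub_mul, coeff_sub, coeff_X_mul, coeff_C_mul]
  rcases Nat.lt_or_ge m (n + 2) with hm2 | hm2
  · have hmn : m = n ∨ m = n + 1 := by omega
    rcases hmn with h | h
    · rw [h, coeff_sub, coeff_X_pow]
      have hn1 : n - 1 + 1 = n := by omega
      have e1 : ((X - C (∑ j, μ j)) * P).coeff n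
          = P.coeff (n-1) - (∑ j, μ j) * P.coeff n := by
        have := hcoeff (n-1); rwa [hn1] at this
      rw [e1, myP_coeff_pred hn μ, hPn]
      simp
      try omega
    · rw [h]
      simp only [coeff_sub, coeff_X_pow, hcoeff]
      have : P.coeff (n + 1) = 0 :=
        coeff_eq_zero_of_natDegree_lt (by rw [myP_natDegree]; omega)
      rw [hPn, this]
      simp
  · have h1 : (X ^ (n+1) : ℂ[X]).coeff m = 0 := by
      rw [coeff_X_pow]; simp; omega
    have h2 : ((X - C (∑ j, μ j)) * P).coeff m = 0 := by
      apply coeff_eq_zero_of_natDegree_lt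
      calc ((X - C (∑ j, μ j)) * P).natDegree ≤ (X - C (∑ j, μ j)).natDegree + P.natDegree :=
            natDegree_mul_le
        _ ≤ 1 + n := by rw [myP_natDegree]; gcongr; exact natDegree_X_sub_C_le _
        _ < m := by omega
    rw [coeff_sub, h1, h2, sub_zero]

lemma key_interp {n : ℕ} (hn : 1 ≤ n) (μ : Fin n → ℂ) (hμ : Function.Injective μ) :
    (X - C (∑ j, μ j)) * ∏ j, (X + C (μ j)) +
      ∑ i, C ((-μ i) ^ (n+1) / ∏ j ∈ Finset.univ.erase i, (μ j - μ i)) *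
        ∏ j ∈ Finset.univ.erase i, (X + C (μ j)) = X ^ (n+1) := by
  set Q : ℂ[X] := X ^ (n+1) - (X - C (∑ j, μ j)) * ∏ j, (X + C (μ j)) with hQ
  have hinj : Set.InjOn (fun i => -μ i) (Finset.univ : Finset (Fin n)) := by
    intro i _ j _ h
    exact hμ (neg_injective h)
  have hdeg : Q.degree < (#(Finset.univ : Finset (Fin n)) : WithBot ℕ) := by
    rw [hQ]
    simpa only [Finset.card_univ, Fintype.card_fin] using degree_Q_lt hn μ
  have hint := Lagrange.eq_interpolate hinj hdeg
  rw [Lagrange.interpolate_apply] at hint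
  have heval : ∀ i : Fin n, Q.eval (-μ i) = (-μ i) ^ (n+1) := by
    intro i
    rw [hQ]
    simp only [eval_sub, eval_mul, eval_pow, eval_X, eval_prod, eval_add, eval_C]
    rw [Finset.prod_eq_zero (Finset.mem_univ i) (by ring)]
    ring
  have hbasis : ∀ i : Fin n, Lagrange.basis Finset.univ (fun i => -μ i) i =
      C ((∏ j ∈ Finset.univ.erase i, (μ j - μ i))⁻¹) * ∏ j ∈ Finset.univ.erase i, (X + C (μ j)) := by
    intro i
    rw [Lagrange.basis, ← Finset.prod_inv_distrib, map_prod, ← Finset.prod_mul_distrib]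
    apply Finset.prod_congr rfl
    intro j _
    rw [Lagrange.basisDivisor]
    congr 1
    · congr 1; ring
    · rw [map_neg]; ring
  calc (X - C (∑ j, μ j)) * ∏ j, (X + C (μ j)) +
      ∑ i, C ((-μ i) ^ (n+1) / ∏ j ∈ Finset.univ.erase i, (μ j - μ i)) *
        ∏ j ∈ Finset.univ.erase i, (X + C (μ j))
      = (X - C (∑ j, μ j)) * ∏ j, (X + C (μ j)) +
        ∑ i, C (Q.eval (-μ i)) * Lagrange.basis Finset.univ (fun i => -μ i) i := by
        congr 1
        apply Finset.sum_congr rfl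
        intro i _
        rw [heval, hbasis, ← mul_assoc, ← C_mul, div_eq_mul_inv]
    _ = (X - C (∑ j, μ j)) * ∏ j, (X + C (μ j)) + Q := by rw [← hint]
    _ = X ^ (n+1) := by rw [hQ]; ring

end Interp

open Polynomial in
/-- Proposition 3: for `Im ξ₀ > 0`, with `a_j`, `b_j`, `χ₀` defined as above, the spectral
characteristic polynomial satisfies `D(χ) = (χ - χ₀)^{n+1}`, i.e. `χ₀` is an
`(n+1)`-multiple root of `D`. -/
theorem Dpoly_maximal_multiple_root (n : ℕ) (hn : 1 ≤ n) (ξ₀ : ℂ)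
    (him : 0 < ξ₀.im) (hξ₀ : ξ₀ ≠ 0) :
    Dpoly n ξ₀ (aProp3 n ξ₀) (bProp3 n ξ₀) = (X - C (chi0Prop3 n ξ₀)) ^ (n + 1) := by
  have hkey := key_interp hn (muP n ξ₀) (muP_inj n ξ₀ hn him)
  have hcomp := congrArg (fun p : ℂ[X] => p.comp (X - C (chi0Prop3 n ξ₀))) hkey
  simp only [add_comp, mul_comp, sub_comp, X_comp, C_comp, pow_comp, Polynomial.prod_comp,
    Polynomial.sum_comp] at hcomp
  have hb : ∀ j : Fin n, X - C (chi0Prop3 n ξ₀) + C (muP n ξ₀ j) =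
      X + C ((bProp3 n ξ₀ j : ℝ) : ℂ) := by
    intro j
    unfold muP
    rw [map_add]
    ring
  have h2ξ : X - C (chi0Prop3 n ξ₀) - C (∑ j, muP n ξ₀ j) = X - C (2 * ξ₀) := by
    rw [← muP_sum n ξ₀, map_add]
    ring
  have hsc : ∀ i : Fin n, C ((-muP n ξ₀ i) ^ (n+1) /
      ∏ j ∈ Finset.univ.erase i, (muP n ξ₀ j - muP n ξ₀ i)) =
      C ξ₀ * C (((aProp3 n ξ₀ i : ℝ) : ℂ) ^ 2) := by
    intro i
    rw [scalar_key n ξ₀ hn him hξ₀ i, map_mul]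
  simp only [hb, h2ξ, hsc] at hcomp
  unfold Dpoly
  rw [Finset.mul_sum]
  simp only [← mul_assoc]
  exact hcomp
end

section
/- Let n ≥ 1 and let q : ℝ → ℂⁿ be a function. Let σ₃ = diag(1, −1, …, −1) ∈ M_{n+1}(ℂ) and, for x ∈ ℝ, let Q(x) be the matrix with Q(x)_{11} = 0, Q(x)_{1,j+1} = conj(q_j(x)), Q(x)_{i+1,1} = q_i(x), Q(x)_{i+1,j+1} = 0, and for λ ≠ 0 set U(λ;x) = i λ^{−2} σ₃ + λ^{−1} Q(x). Fix λ ∈ ℂ with λ ≠ 0. (i) If Φ : ℝ → M_{n+1}(ℂ) is differentiable with Φ'(x) = U(conj λ; x)·Φ(x) for all x, then the function Ψ(x) = σ₃ (Φ(x))^† σ₃ is differentiable and satisfies Ψ'(x) = −Ψ(x)·U(λ;x) for all x. (ii) If Φ : ℝ → M_{n+1}(ℂ) is differentiable with Φ'(x) = U(λ;x)·Φ(x) for all x, then the function Ξ(x) = σ₃ Φ(x) σ₃ satisfies Ξ'(x) = U(−λ;x)·Ξ(x) for all x. -/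
open Matrix

/-- `σ₃ = diag(1, -1, …, -1)`: one `+1` followed by `n` entries `-1`. -/
def sigma3 (n : ℕ) : Matrix (Fin (n + 1)) (Fin (n + 1)) ℂ :=
  Matrix.diagonal fun i => if i = 0 then 1 else -1

/-- The potential matrix `Q` with zero diagonal block structure: first row `conj(q_j)`,
first column `q_i`, all other entries `0`. -/
def Qmat (n : ℕ) (q : Fin n → ℂ) : Matrix (Fin (n + 1)) (Fin (n + 1)) ℂ :=
  Matrix.of fun i j =>
    if hi : i = 0 then
      if hj : j = 0 then 0 else (starRingEnd ℂ) (q (j.pred hj))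
    else
      if j = 0 then q (i.pred hi) else 0

/-- The spatial Lax matrix `U(λ; x) = i λ⁻² σ₃ + λ⁻¹ Q(x)`. -/
noncomputable def Umat (n : ℕ) (q : Fin n → ℂ) (lam : ℂ) :
    Matrix (Fin (n + 1)) (Fin (n + 1)) ℂ :=
  (Complex.I * (lam ^ 2)⁻¹) • sigma3 n + lam⁻¹ • Qmat n q

lemma sigma3_sq (n : ℕ) : sigma3 n * sigma3 n = 1 := by
  rw [sigma3, Matrix.diagonal_mul_diagonal]
  have : (fun i : Fin (n+1) => (if i = 0 then (1:ℂ) else -1) * (if i = 0 then 1 else -1))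
      = fun _ => 1 := by funext i; split_ifs <;> ring
  rw [this, Matrix.diagonal_one]

lemma sigma3_herm (n : ℕ) : (sigma3 n)ᴴ = sigma3 n := by
  ext i j
  simp only [conjTranspose_apply, sigma3, Matrix.diagonal_apply]
  split_ifs <;> simp_all

lemma Qmat_herm (n : ℕ) (q : Fin n → ℂ) : (Qmat n q)ᴴ = Qmat n q := by
  ext i j
  simp only [conjTranspose_apply, Qmat, Matrix.of_apply]
  by_cases hi : i = 0 <;> by_cases hj : j = 0 <;> simp [hi, hj]

lemma sigma3_Q (n : ℕ) (q : Fin n → ℂ) :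
    sigma3 n * Qmat n q * sigma3 n = -(Qmat n q) := by
  ext i j
  simp only [sigma3, Matrix.diagonal_mul, Matrix.mul_diagonal, Matrix.neg_apply, Qmat,
    Matrix.of_apply]
  by_cases hi : i = 0 <;> by_cases hj : j = 0 <;> simp [hi, hj] <;> ring

lemma sigma3_cancel (n : ℕ) (M : Matrix (Fin (n+1)) (Fin (n+1)) ℂ) :
    sigma3 n * (sigma3 n * M) = M := by
  rw [← Matrix.mul_assoc, sigma3_sq, Matrix.one_mul]

lemma sandwich (n : ℕ) (q : Fin n → ℂ) (a b : ℂ) :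
    sigma3 n * (a • sigma3 n + b • Qmat n q) * sigma3 n
      = a • sigma3 n + (-b) • Qmat n q := by
  rw [mul_add, add_mul, Matrix.mul_smul, Matrix.smul_mul, Matrix.mul_smul, Matrix.smul_mul,
    show sigma3 n * sigma3 n * sigma3 n = sigma3 n by rw [sigma3_sq, Matrix.one_mul],
    sigma3_Q, neg_smul, smul_neg]

lemma key1 (n : ℕ) (q : Fin n → ℂ) (lam : ℂ) :
    sigma3 n * (Umat n q ((starRingEnd ℂ) lam))ᴴ * sigma3 n = -(Umat n q lam) := by
  unfold Umat
  rw [conjTranspose_add, conjTranspose_smul, conjTranspose_smul, sigma3_herm, Qmat_herm,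
    sandwich]
  have h1 : (starRingEnd ℂ) (Complex.I * (((starRingEnd ℂ) lam) ^ 2)⁻¹)
      = -(Complex.I * (lam ^ 2)⁻¹) := by
    simp only [_root_.map_mul, map_inv₀, map_pow, Complex.conj_I, Complex.conj_conj]; ring
  have h2 : (starRingEnd ℂ) (((starRingEnd ℂ) lam)⁻¹) = lam⁻¹ := by
    simp [map_inv₀]
  simp only [← starRingEnd_apply]
  rw [h1, h2]; module

lemma key2 (n : ℕ) (q : Fin n → ℂ) (lam : ℂ) :
    sigma3 n * Umat n q lam * sigma3 n = Umat n q (-lam) := by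
  unfold Umat
  rw [sandwich]
  congr 1
  · rw [neg_pow, Even.neg_one_pow (by norm_num), one_mul]
  · rw [inv_neg, neg_smul]

/-- (i) If `Φ' = U(conj λ; x) Φ` (entrywise), then `Ψ = σ₃ Φ^† σ₃` satisfies the adjoint
equation `Ψ' = -Ψ U(λ; x)`.  (ii) If `Φ' = U(λ; x) Φ`, then `Ξ = σ₃ Φ σ₃` satisfies
`Ξ' = U(-λ; x) Ξ`. -/
theorem Umat_adjoint_solutions (n : ℕ) (hn : 1 ≤ n) (q : ℝ → Fin n → ℂ)
    (lam : ℂ) (hlam : lam ≠ 0) :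
    (∀ Φ : ℝ → Matrix (Fin (n + 1)) (Fin (n + 1)) ℂ,
      (∀ (x : ℝ) (i j : Fin (n + 1)),
        HasDerivAt (fun y => Φ y i j) ((Umat n (q x) ((starRingEnd ℂ) lam) * Φ x) i j) x) →
      ∀ (x : ℝ) (i j : Fin (n + 1)),
        HasDerivAt (fun y => (sigma3 n * (Φ y)ᴴ * sigma3 n) i j)
          ((-((sigma3 n * (Φ x)ᴴ * sigma3 n) * Umat n (q x) lam)) i j) x) ∧
    (∀ Φ : ℝ → Matrix (Fin (n + 1)) (Fin (n + 1)) ℂ,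
      (∀ (x : ℝ) (i j : Fin (n + 1)),
        HasDerivAt (fun y => Φ y i j) ((Umat n (q x) lam * Φ x) i j) x) →
      ∀ (x : ℝ) (i j : Fin (n + 1)),
        HasDerivAt (fun y => (sigma3 n * Φ y * sigma3 n) i j)
          ((Umat n (q x) (-lam) * (sigma3 n * Φ x * sigma3 n)) i j) x) := by
  constructor
  · intro Φ hΦ x i j
    set A := Umat n (q x) ((starRingEnd ℂ) lam) with hA
    have hs : ∀ M : Matrix (Fin (n+1)) (Fin (n+1)) ℂ,
        (sigma3 n * Mᴴ * sigma3 n) i j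
          = (if i = 0 then (1:ℂ) else -1) * star (M j i) * (if j = 0 then (1:ℂ) else -1) := by
      intro M
      simp [sigma3, Matrix.diagonal_mul, Matrix.mul_diagonal, conjTranspose_apply]
    have hM : (-((sigma3 n * (Φ x)ᴴ * sigma3 n) * Umat n (q x) lam))
        = sigma3 n * (A * Φ x)ᴴ * sigma3 n := by
      rw [conjTranspose_mul, ← mul_neg, ← key1 n (q x) lam]
      simp only [Matrix.mul_assoc, sigma3_cancel]
      rfl
    have h1 : (fun y => (sigma3 n * (Φ y)ᴴ * sigma3 n) i j)
        = fun y => (if i = 0 then (1:ℂ) else -1) * star (Φ y j i)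
            * (if j = 0 then (1:ℂ) else -1) := funext fun y => hs (Φ y)
    have h2 : (-((sigma3 n * (Φ x)ᴴ * sigma3 n) * Umat n (q x) lam)) i j
        = (if i = 0 then (1:ℂ) else -1) * star ((A * Φ x) j i)
            * (if j = 0 then (1:ℂ) else -1) := by rw [hM]; exact hs _
    rw [h1, h2]
    exact ((hΦ x j i).star.const_mul _).mul_const _
  · intro Φ hΦ x i j
    have hs : ∀ M : Matrix (Fin (n+1)) (Fin (n+1)) ℂ,
        (sigma3 n * M * sigma3 n) i j
          = (if i = 0 then (1:ℂ) else -1) * M i j * (if j = 0 then (1:ℂ) else -1) := by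
      intro M
      simp [sigma3, Matrix.diagonal_mul, Matrix.mul_diagonal]
    have hM : Umat n (q x) (-lam) * (sigma3 n * Φ x * sigma3 n)
        = sigma3 n * (Umat n (q x) lam * Φ x) * sigma3 n := by
      rw [← key2 n (q x) lam]
      simp only [Matrix.mul_assoc, sigma3_cancel]
    have h1 : (fun y => (sigma3 n * Φ y * sigma3 n) i j)
        = fun y => (if i = 0 then (1:ℂ) else -1) * Φ y i j
            * (if j = 0 then (1:ℂ) else -1) := funext fun y => hs (Φ y)
    have h2 : (Umat n (q x) (-lam) * (sigma3 n * Φ x * sigma3 n)) i j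
        = (if i = 0 then (1:ℂ) else -1) * ((Umat n (q x) lam * Φ x) i j)
            * (if j = 0 then (1:ℂ) else -1) := by rw [hM]; exact hs _
    rw [h1, h2]
    exact ((hΦ x i j).const_mul _).mul_const _
end
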